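/- arXiv:1510.01453 — 5 statements merged into one kernel-verified Lean document; each statement's English description precedes it below -/
import Mathlib

section
/- Let H be a constraint graph such that for every board G, the homomorphism space Hom(G,H) is single-site fillable. Then H has a safe symbol. -/
/-- A graph, possibly with loops: a symmetric relation on vertices. -/
structure LoopyGraph (V : Type*) where
  Adj : V → V → Prop
  symm : ∀ {u v : V}, Adj u v → Adj v u

namespace LoopyGraph

variable {VG VH : Type*}

/-- `G.ReachIn n x y`: there is a walk of length exactly `n` from `x` to `y`. -/
def ReachIn (G : LoopyGraph VG) : ℕ → VG → VG → Prop
  | 0, x, y => x = y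
  | n + 1, x, y => ∃ z, G.Adj x z ∧ G.ReachIn n z y

/-- `dist(A, B) ≥ g`: no walk of length `< g` connects a point of `A` to a point of `B`. -/
def DistGe (G : LoopyGraph VG) (A B : Set VG) (g : ℕ) : Prop :=
  ∀ x ∈ A, ∀ y ∈ B, ∀ n < g, ¬ G.ReachIn n x y

/-- A graph homomorphism from `G` to `H`. -/
def IsHom (G : LoopyGraph VG) (H : LoopyGraph VH) (f : VG → VH) : Prop :=
  ∀ ⦃x y : VG⦄, G.Adj x y → H.Adj (f x) (f y)

/-- `f` is a graph homomorphism on the subgraph of `G` induced by `S` (local admissibility). -/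
def IsHomOn (G : LoopyGraph VG) (H : LoopyGraph VH) (f : VG → VH) (S : Set VG) : Prop :=
  ∀ ⦃x⦄, x ∈ S → ∀ ⦃y⦄, y ∈ S → G.Adj x y → H.Adj (f x) (f y)

/-- The configuration `α|_A` is globally admissible: it extends to a point of `Hom(G,H)`. -/
def GlobAdm (G : LoopyGraph VG) (H : LoopyGraph VH) (A : Set VG) (α : VG → VH) : Prop :=
  ∃ ω : VG → VH, G.IsHom H ω ∧ ∀ x ∈ A, ω x = α x

/-- A board: countable, simple, connected, locally finite, with at least two vertices. -/
structure IsBoard (G : LoopyGraph VG) : Prop where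
  countable : Countable VG
  simple : ∀ v : VG, ¬ G.Adj v v
  connected : ∀ x y : VG, ∃ n : ℕ, G.ReachIn n x y
  locallyFinite : ∀ v : VG, {w : VG | G.Adj v w}.Finite
  nontrivial : Nontrivial VG

/-- Single-site fillability of `Hom(G, H)`. -/
def SSF (G : LoopyGraph VG) (H : LoopyGraph VH) : Prop :=
  ∀ (x : VG) (B : Set VG), B ⊆ {y : VG | G.Adj x y} →
    ∀ β : VG → VH, G.IsHomOn H β B →
      ∃ α : VG → VH, G.IsHomOn H α (insert x B) ∧ ∀ y ∈ B, α y = β y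

/-- Topological strong spatial mixing with gap `g`. -/
def TSSM (G : LoopyGraph VG) (H : LoopyGraph VH) (g : ℕ) : Prop :=
  ∀ (A B S : Set VG), A.Finite → B.Finite → S.Finite → G.DistGe A B g →
    ∀ α σ β : VG → VH,
      (∃ ω, G.IsHom H ω ∧ (∀ x ∈ A, ω x = α x) ∧ (∀ x ∈ S, ω x = σ x)) →
      (∃ ω, G.IsHom H ω ∧ (∀ x ∈ S, ω x = σ x) ∧ (∀ x ∈ B, ω x = β x)) →
      ∃ ω, G.IsHom H ω ∧ (∀ x ∈ A, ω x = α x) ∧ (∀ x ∈ S, ω x = σ x) ∧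
        ∀ x ∈ B, ω x = β x

/-- Strong irreducibility with gap `g`. -/
def StrongIrred (G : LoopyGraph VG) (H : LoopyGraph VH) (g : ℕ) : Prop :=
  ∀ (A B : Set VG), A.Finite → B.Finite → A.Nonempty → B.Nonempty → Disjoint A B →
    G.DistGe A B g → ∀ α β : VG → VH,
      G.GlobAdm H A α → G.GlobAdm H B β →
      ∃ ω, G.IsHom H ω ∧ (∀ x ∈ A, ω x = α x) ∧ ∀ x ∈ B, ω x = β x

end LoopyGraph

/-- If for every board `G` the homomorphism space `Hom(G, H)` is single-site
fillable, then the constraint graph `H` has a safe symbol. -/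
theorem SSF_forall_boards_implies_safe_symbol {VH : Type} [Fintype VH] [Nonempty VH]
    (H : LoopyGraph VH)
    (hssf : ∀ (VG : Type) (G : LoopyGraph VG), G.IsBoard → G.SSF H) :
    ∃ s : VH, ∀ v : VH, H.Adj s v := by
  classical
  -- The star board on `Option VH`: center `none`, leaves `some v`.
  let G : LoopyGraph (Option VH) :=
    { Adj := fun a b => (a = none ∧ b ≠ none) ∨ (a ≠ none ∧ b = none)
      symm := by rintro a b (⟨h1, h2⟩ | ⟨h1, h2⟩) <;> [right; left] <;> exact ⟨h2, h1⟩ }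
  have hboard : G.IsBoard := by
    refine ⟨inferInstance, ?_, ?_, fun v => Set.toFinite _, ?_⟩
    · rintro v (⟨h1, h2⟩ | ⟨h1, h2⟩) <;> simp_all
    · intro x y
      have key : ∀ z : Option VH, ∃ n, G.ReachIn n none z := by
        intro z
        match z with
        | none => exact ⟨0, rfl⟩
        | some v => exact ⟨1, some v, Or.inl ⟨rfl, by simp⟩, rfl⟩
      match x with
      | none => exact key y
      | some v =>
        obtain ⟨n, hn⟩ := key y
        exact ⟨n + 1, none, Or.inr ⟨by simp, rfl⟩, hn⟩
    · exact ⟨none, some Classical.ofNonempty, by simp⟩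
  have hS := hssf (Option VH) G hboard
  -- Apply SSF at the center with boundary all leaves, β(some v) = v.
  obtain ⟨α, hα, hαβ⟩ := hS none {y | G.Adj none y} (fun _ h => h)
    (fun o => o.getD Classical.ofNonempty)
    (by
      rintro x hx y hy (⟨h1, h2⟩ | ⟨h1, h2⟩)
      · exact absurd h1 (by rcases hx with ⟨hx1, hx2⟩ | ⟨hx1, hx2⟩ <;> simp_all)
      · exact absurd h2 (by rcases hy with ⟨hy1, hy2⟩ | ⟨hy1, hy2⟩ <;> simp_all))
  refine ⟨α none, fun v => ?_⟩
  have hv : (some v : Option VH) ∈ ({y | G.Adj none y} : Set (Option VH)) :=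
    Or.inl ⟨rfl, by simp⟩
  have := hα (Set.mem_insert _ _) (Set.mem_insert_of_mem _ hv) hv
  rwa [hαβ (some v) hv] at this
end

section
/- A finite simple graph is chordal if and only if it has a perfect elimination ordering, i.e., an ordering v_1,...,v_n of its vertices such that for each i, the induced subgraph on {v_i} ∪ ({v_{i+1},...,v_n} ∩ N(v_i)) is a complete graph. -/
/-- A simple graph is chordal if every cycle of length at least 4 has a chord. -/
def SimpleGraph.IsChordal {V : Type*} (G : SimpleGraph V) : Prop :=
  ∀ (v : V) (c : G.Walk v v), c.IsCycle → 4 ≤ c.length →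
    ∃ u w : V, u ∈ c.support ∧ w ∈ c.support ∧ G.Adj u w ∧ s(u, w) ∉ c.edges

open SimpleGraph Walk

section Aux

variable {V : Type} {G : SimpleGraph V}

lemma aux_support_getElem : ∀ {u v : V} (p : G.Walk u v) (i : ℕ) (hi : i ≤ p.length),
    p.support[i]'(by rw [Walk.length_support]; omega) = p.getVert i := by
  intro u v p
  induction p with
  | nil => intro i hi; simp at hi; subst hi; simp
  | cons h q ih =>
    intro i hi
    cases i with
    | zero => simp
    | succ n =>
      simp only [Walk.support_cons, Walk.getVert_cons_succ]
      rw [List.getElem_cons_succ]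
      exact ih n (by simpa using hi)

lemma aux_getVert_injOn {u v : V} {p : G.Walk u v} (hp : p.IsPath) {i j : ℕ}
    (hi : i ≤ p.length) (hj : j ≤ p.length) (h : p.getVert i = p.getVert j) : i = j := by
  rw [← aux_support_getElem p i hi, ← aux_support_getElem p j hj] at h
  have nd := hp.support_nodup
  exact (List.Nodup.getElem_inj_iff nd).mp h

/-- In a path starting at `u`, an edge incident to `u` must be the first edge. -/
lemma aux_edge_fst {u v w : V} {q : G.Walk u v} (hq : q.IsPath)
    (he : s(u, w) ∈ q.edges) : q.getVert 1 = w := by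
  cases q with
  | nil => simp at he
  | cons h r =>
    rename_i x
    rw [Walk.edges_cons, List.mem_cons] at he
    rcases he with he | he
    · rw [Sym2.eq_iff] at he
      rcases he with ⟨h1, h2⟩ | ⟨h1, h2⟩
      · simp [h2]
      · exact absurd h1 h.ne
    · exact absurd (Walk.fst_mem_support_of_mem_edges r he)
        ((by simpa [Walk.cons_isPath_iff] using hq : _ ∧ _).2)

/-- `v` is simplicial within the vertex set `s`. -/
def SimpIn {V : Type} (G : SimpleGraph V) (s : Finset V) (v : V) : Prop :=
  ∀ u ∈ s, ∀ w ∈ s, G.Adj v u → G.Adj v w → u ≠ w → G.Adj u w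

lemma peo_to_chordal {V : Type} [Fintype V] [DecidableEq V] (G : SimpleGraph V)
    (e : Fin (Fintype.card V) ≃ V)
    (he : ∀ i j k : Fin (Fintype.card V), i < j → i < k → j ≠ k →
        G.Adj (e i) (e j) → G.Adj (e i) (e k) → G.Adj (e j) (e k)) :
    G.IsChordal := by
  intro v c hc hlen
  classical
  set f := e.symm with hf
  obtain ⟨m, hm0, hmin0⟩ := c.support.toFinset.exists_min_image f ⟨v, by simp⟩
  rw [List.mem_toFinset] at hm0
  have hmin : ∀ x ∈ c.support, f m ≤ f x := fun x hx => hmin0 x (List.mem_toFinset.mpr hx)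
  set c' := c.rotate m hm0 with hc'def
  have hcyc' : c'.IsCycle := hc.rotate hm0
  have hmem : ∀ x, x ∈ c'.support ↔ x ∈ c.support := by
    intro x
    rw [hc'def, Walk.rotate, Walk.mem_support_append_iff]
    conv_rhs => rw [← c.take_spec hm0]
    rw [Walk.mem_support_append_iff, or_comm]
  have hlen' : c'.length = c.length := by
    rw [hc'def, Walk.rotate, Walk.length_append]
    conv_rhs => rw [← c.take_spec hm0, Walk.length_append]
    omega
  obtain ⟨u, h1, p, hp_eq⟩ := Walk.not_nil_iff.mp hcyc'.not_nil
  have hcons : (Walk.cons h1 p).IsCycle := hp_eq ▸ hcyc'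
  obtain ⟨hp_path, hmu_ne⟩ := (Walk.cons_isCycle_iff p h1).mp hcons
  have hplen : 3 ≤ p.length := by
    have : c'.length = p.length + 1 := by rw [hp_eq]; simp
    omega
  have hprev_nil : ¬ p.reverse.Nil := by
    rw [Walk.nil_iff_length_eq, Walk.length_reverse]; omega
  obtain ⟨w, h2, t, ht⟩ := Walk.not_nil_iff.mp hprev_nil
  have hw_pen : p.getVert (p.length - 1) = w := by
    have : p.reverse.getVert 1 = w := by rw [ht]; exact (Walk.getVert_cons_succ (n := 0) t h2).trans t.getVert_zero
    rw [Walk.getVert_reverse] at this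
    simpa using this
  have huw : u ≠ w := by
    intro h
    have : p.getVert 0 = p.getVert (p.length - 1) := by
      rw [hw_pen, Walk.getVert_zero, h]
    have := aux_getVert_injOn hp_path (by omega) (by omega) this
    omega
  have hum : u ≠ m := h1.ne'
  have hwm : w ≠ m := h2.ne'
  have hu_sup : u ∈ c.support := by
    rw [← hmem]; rw [hp_eq]; simp
  have hw_supp : w ∈ p.support := by
    have : w ∈ p.reverse.support := by rw [ht]; simp
    rwa [Walk.support_reverse, List.mem_reverse] at this
  have hw_sup : w ∈ c.support := by
    rw [← hmem, hp_eq]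
    exact List.mem_of_mem_tail (by simpa using hw_supp)
  have hfu : f m < f u :=
    lt_of_le_of_ne (hmin u hu_sup) (fun h => hum (by have := congrArg e h; simpa [hf] using this.symm))
  have hfw : f m < f w :=
    lt_of_le_of_ne (hmin w hw_sup) (fun h => hwm (by have := congrArg e h; simpa [hf] using this.symm))
  have hfuw : f u ≠ f w := fun h => huw (by have := congrArg e h; simpa [hf] using this)
  have hadj : G.Adj u w := by
    have := he (f m) (f u) (f w) hfu hfw hfuw (by simpa [hf] using h1) (by simpa [hf] using h2)
    simpa [hf] using this
  refine ⟨u, w, hu_sup, hw_sup, hadj, ?_⟩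
  intro hedge
  have hedge' : s(u, w) ∈ c'.edges := (c.rotate_edges m hm0).mem_iff.mpr hedge
  rw [hp_eq, Walk.edges_cons, List.mem_cons] at hedge'
  rcases hedge' with h' | h'
  · rw [Sym2.eq_iff] at h'
    rcases h' with ⟨h3, _⟩ | ⟨_, h4⟩
    · exact hum h3
    · exact hwm h4
  · have := aux_edge_fst hp_path h'
    rw [← hw_pen] at this
    have := aux_getVert_injOn hp_path (by omega) (by omega) this
    omega


lemma aux_first_edge_mem {u v : V} {r : G.Walk u v} (h : ¬ r.Nil) :
    s(u, r.getVert 1) ∈ r.edges := by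
  cases r with
  | nil => simp at h
  | cons h' r' => simp

lemma aux_dropUntil_or [DecidableEq V] :
    ∀ {x y : V} (p : G.Walk x y) (u w : V) (hu : u ∈ p.support) (hw : w ∈ p.support),
    w ∈ (p.dropUntil u hu).support ∨ u ∈ (p.dropUntil w hw).support := by
  intro x y p
  induction p with
  | nil =>
    intro u w hu hw
    simp only [Walk.support_nil, List.mem_singleton] at hu hw
    subst hu; subst hw
    left; simp [Walk.dropUntil]
  | @cons a b c h r ih =>
    intro u w hu hw
    by_cases hau : a = u
    · subst hau
      left
      have : (Walk.cons h r).dropUntil a hu = Walk.cons h r := by simp [Walk.dropUntil]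
      rw [this]; exact hw
    · by_cases haw : a = w
      · subst haw
        right
        have : (Walk.cons h r).dropUntil a hw = Walk.cons h r := by simp [Walk.dropUntil]
        rw [this]; exact hu
      · have hu' : u ∈ r.support := by
          have h1 := hu
          rw [Walk.support_cons, List.mem_cons] at h1
          rcases h1 with h1 | h1
          · exact absurd h1.symm hau
          · exact h1
        have hw' : w ∈ r.support := by
          have h1 := hw
          rw [Walk.support_cons, List.mem_cons] at h1
          rcases h1 with h1 | h1
          · exact absurd h1.symm haw
          · exact h1
        have e1 : (Walk.cons h r).dropUntil u hu = r.dropUntil u hu' := by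
          simp [Walk.dropUntil, hau]
        have e2 : (Walk.cons h r).dropUntil w hw = r.dropUntil w hw' := by
          simp [Walk.dropUntil, haw]
        rw [e1, e2]
        exact ih u w hu' hw'

lemma aux_exists_min_path {x y : V} (X : Set V)
    (h : ∃ w : G.Walk x y, ∀ z ∈ w.support, z ∈ X) :
    ∃ p : G.Walk x y, p.IsPath ∧ (∀ z ∈ p.support, z ∈ X) ∧
      ∀ q : G.Walk x y, (∀ z ∈ q.support, z ∈ X) → p.length ≤ q.length := by
  classical
  set S : Set ℕ := {n | ∃ w : G.Walk x y, (∀ z ∈ w.support, z ∈ X) ∧ w.length = n} with hS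
  have hne : S.Nonempty := by
    obtain ⟨w, hw⟩ := h
    exact ⟨w.length, w, hw, rfl⟩
  obtain ⟨n, ⟨w0, hw0, hw0l⟩, hminS⟩ := Nat.lt_wfRel.wf.has_min S hne
  refine ⟨w0.bypass, Walk.bypass_isPath w0, ?_, ?_⟩
  · intro z hz
    exact hw0 z (Walk.support_bypass_subset w0 hz)
  · intro q hq
    have h1 : q.length ∈ S := ⟨q, hq, rfl⟩
    have h2 := hminS q.length h1
    have := Walk.length_bypass_le w0
    change ¬ q.length < n at h2
    omega

lemma aux_min_path_chord [DecidableEq V] {x y : V} {X : Set V} {p : G.Walk x y}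
    (hpX : ∀ z ∈ p.support, z ∈ X)
    (hmin : ∀ q : G.Walk x y, (∀ z ∈ q.support, z ∈ X) → p.length ≤ q.length)
    {u w : V} (hu : u ∈ p.support) (hw : w ∈ p.support) (ha : G.Adj u w) :
    s(u, w) ∈ p.edges := by
  by_contra he
  have key : ∀ (u w : V) (hu : u ∈ p.support) (hw : w ∈ (p.dropUntil u hu).support),
      G.Adj u w → s(u, w) ∉ p.edges → False := by
    intro u w hu hw ha he
    set t := p.takeUntil u hu with ht
    set d := p.dropUntil u hu with hd
    set d2 := d.dropUntil w hw with hd2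
    set q : G.Walk x y := t.append (Walk.cons ha d2) with hq
    have hlq : q.length = t.length + 1 + d2.length := by
      rw [hq, Walk.length_append, Walk.length_cons]; omega
    have hsplit : t.length + d.length = p.length := by
      have := congrArg Walk.length (p.take_spec hu)
      rwa [Walk.length_append] at this
    have hsplit2 : (d.takeUntil w hw).length + d2.length = d.length := by
      have := congrArg Walk.length (d.take_spec hw)
      rwa [Walk.length_append] at this
    have h2 : 2 ≤ (d.takeUntil w hw).length := by
      by_contra hlt
      push_neg at hlt
      interval_cases hl : (d.takeUntil w hw).length
      · exact ha.ne (Walk.eq_of_length_eq_zero hl)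
      · have hnn : ¬ (d.takeUntil w hw).Nil := by
          rw [Walk.nil_iff_length_eq, hl]; omega
        have hmem := aux_first_edge_mem (G := G) hnn
        have hgv : (d.takeUntil w hw).getVert 1 = w := by
          conv_lhs => rw [← hl]
          exact Walk.getVert_length _
        rw [hgv] at hmem
        exact he (Walk.edges_dropUntil_subset p hu (Walk.edges_takeUntil_subset d hw hmem))
    have hqX : ∀ z ∈ q.support, z ∈ X := by
      intro z hz
      rw [hq, Walk.mem_support_append_iff] at hz
      rcases hz with hz | hz
      · exact hpX z (Walk.support_takeUntil_subset p hu hz)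
      · rw [Walk.support_cons, List.mem_cons] at hz
        rcases hz with rfl | hz
        · exact hpX z (Walk.support_dropUntil_subset p hu (Walk.start_mem_support d))
        · exact hpX z (Walk.support_dropUntil_subset p hu (Walk.support_dropUntil_subset d hw hz))
    have := hmin q hqX
    omega
  rcases aux_dropUntil_or p u w hu hw with h | h
  · exact key u w hu h ha he
  · refine key w u hw h ha.symm ?_
    rwa [Sym2.eq_swap]

lemma aux_dirac [DecidableEq V] (hG : G.IsChordal) :
    ∀ (n : ℕ) (s : Finset V), s.card = n →
    (∀ u ∈ s, ∀ w ∈ s, u ≠ w → G.Adj u w) ∨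
      ∃ v ∈ s, ∃ w ∈ s, v ≠ w ∧ ¬ G.Adj v w ∧ SimpIn G s v ∧ SimpIn G s w := by
  intro n
  induction n using Nat.strong_induction_on with
  | _ n ih =>
  intro s hcard
  by_cases hcomp : ∀ u ∈ s, ∀ w ∈ s, u ≠ w → G.Adj u w
  · exact Or.inl hcomp
  right
  push_neg at hcomp
  obtain ⟨a, ha, b, hb, hab, hnadj⟩ := hcomp
  classical
  set Sep : Finset V → Prop := fun S => S ⊆ s ∧ a ∉ S ∧ b ∉ S ∧
    ¬ ∃ w : G.Walk a b, ∀ z ∈ w.support, z ∈ s ∧ z ∉ S with hSepDef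
  have hSep0 : Sep (s \ {a, b}) := by
    refine ⟨Finset.sdiff_subset, by simp, by simp, ?_⟩
    rintro ⟨w, hw⟩
    obtain ⟨z0, hadj0, r, rfl⟩ := Walk.exists_eq_cons_of_ne hab w
    have hz0 : z0 ∈ (Walk.cons hadj0 r).support := by simp
    obtain ⟨hz0s, hz0n⟩ := hw z0 hz0
    have : z0 = a ∨ z0 = b := by
      by_contra hc
      push_neg at hc
      exact hz0n (Finset.mem_sdiff.mpr ⟨hz0s, by simp [hc.1, hc.2]⟩)
    rcases this with rfl | rfl
    · exact hadj0.ne rfl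
    · exact hnadj hadj0
  -- minimum cardinality separator
  obtain ⟨m, ⟨S, hSepS, hScard⟩, hminS'⟩ :=
    Nat.lt_wfRel.wf.has_min {m | ∃ S, Sep S ∧ S.card = m} ⟨_, _, hSep0, rfl⟩
  have hminS : ∀ S', Sep S' → S.card ≤ S'.card := by
    intro S' hS'
    have := hminS' S'.card ⟨S', hS', rfl⟩
    change ¬ S'.card < m at this
    omega
  obtain ⟨hSs, haS, hbS, hSsep⟩ := hSepS
  set A : Set V := {v | ∃ w : G.Walk a v, ∀ z ∈ w.support, z ∈ s ∧ z ∉ S} with hA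
  set B : Set V := {v | ∃ w : G.Walk b v, ∀ z ∈ w.support, z ∈ s ∧ z ∉ S} with hB
  have haA : a ∈ A := ⟨Walk.nil, by simp [ha, haS]⟩
  have hbB : b ∈ B := ⟨Walk.nil, by simp [hb, hbS]⟩
  have hAs : ∀ v ∈ A, v ∈ s ∧ v ∉ S := fun v ⟨w, hw⟩ => hw v w.end_mem_support
  have hBs : ∀ v ∈ B, v ∈ s ∧ v ∉ S := fun v ⟨w, hw⟩ => hw v w.end_mem_support
  have hAB : ∀ v, v ∈ A → v ∈ B → False := by
    rintro v ⟨w1, h1⟩ ⟨w2, h2⟩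
    refine hSsep ⟨w1.append w2.reverse, ?_⟩
    intro z hz
    rw [Walk.mem_support_append_iff] at hz
    rcases hz with hz | hz
    · exact h1 z hz
    · rw [Walk.support_reverse, List.mem_reverse] at hz
      exact h2 z hz
  have hAclose : ∀ v ∈ A, ∀ z, G.Adj v z → z ∈ s → z ∉ S → z ∈ A := by
    rintro v ⟨w, hw⟩ z hadj hzs hzS
    refine ⟨w.concat hadj, ?_⟩
    intro t ht
    rw [Walk.support_concat, List.mem_append] at ht
    rcases ht with ht | ht
    · exact hw t ht
    · simp only [List.mem_singleton] at ht
      subst ht; exact ⟨hzs, hzS⟩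
  have hBclose : ∀ v ∈ B, ∀ z, G.Adj v z → z ∈ s → z ∉ S → z ∈ B := by
    rintro v ⟨w, hw⟩ z hadj hzs hzS
    refine ⟨w.concat hadj, ?_⟩
    intro t ht
    rw [Walk.support_concat, List.mem_append] at ht
    rcases ht with ht | ht
    · exact hw t ht
    · simp only [List.mem_singleton] at ht
      subst ht; exact ⟨hzs, hzS⟩
  have hAall : ∀ (v : V) (w : G.Walk a v), (∀ z ∈ w.support, z ∈ s ∧ z ∉ S) →
      ∀ z ∈ w.support, z ∈ A := by
    intro v w hw z hz
    exact ⟨w.takeUntil z hz, fun t ht => hw t (w.support_takeUntil_subset hz ht)⟩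
  have hBall : ∀ (v : V) (w : G.Walk b v), (∀ z ∈ w.support, z ∈ s ∧ z ∉ S) →
      ∀ z ∈ w.support, z ∈ B := by
    intro v w hw z hz
    exact ⟨w.takeUntil z hz, fun t ht => hw t (w.support_takeUntil_subset hz ht)⟩
  -- generic: from a walk avoiding `S.erase x` and hitting `x`, extract a neighbour of `x`
  have hside : ∀ (x : V), x ∈ S → ∀ (c d : V) (p : G.Walk c d), c ∉ S →
      (∀ z ∈ p.support, z ∈ s ∧ z ∉ S.erase x) → x ∈ p.support →
      ∃ y, G.Adj x y ∧ ∃ w : G.Walk c y, ∀ z ∈ w.support, z ∈ s ∧ z ∉ S := by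
    intro x hxS c d p hcS hp hxp
    set q := p.takeUntil x hxp with hq
    have hqcnt : q.support.count x = 1 := p.count_support_takeUntil_eq_one hxp
    have hqsub : ∀ z ∈ q.support, z ∈ s ∧ z ∉ S.erase x :=
      fun z hz => hp z (p.support_takeUntil_subset hxp hz)
    have hcx : c ≠ x := fun h => hcS (h ▸ hxS)
    have hqnn : ¬ q.reverse.Nil := by
      rw [Walk.nil_iff_length_eq, Walk.length_reverse]
      intro h
      exact hcx (Walk.eq_of_length_eq_zero h)
    obtain ⟨y, hxy, t, hqr⟩ := Walk.not_nil_iff.mp hqnn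
    have hxt : x ∉ t.support := by
      have h1 : q.reverse.support = x :: t.support := by rw [hqr]; simp
      have h2 : q.reverse.support.count x = 1 := by
        rw [Walk.support_reverse, List.count_reverse]
        exact hqcnt
      rw [h1, List.count_cons_self] at h2
      intro hmem
      have h3 : 0 < t.support.count x := List.count_pos_iff.mpr hmem
      omega
    have htq : ∀ z ∈ t.support, z ∈ q.support := by
      intro z hz
      have : z ∈ q.reverse.support := by rw [hqr]; simp [hz]
      rwa [Walk.support_reverse, List.mem_reverse] at this
    refine ⟨y, hxy, t.reverse, ?_⟩
    intro z hz
    rw [Walk.support_reverse, List.mem_reverse] at hz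
    obtain ⟨hzs, hze⟩ := hqsub z (htq z hz)
    refine ⟨hzs, fun hzS => ?_⟩
    have hzx : z ≠ x := fun h => hxt (h ▸ hz)
    exact hze (Finset.mem_erase.mpr ⟨hzx, hzS⟩)
  have hnbr : ∀ x ∈ S, (∃ y ∈ A, G.Adj x y) ∧ (∃ y ∈ B, G.Adj x y) := by
    intro x hxS
    have hex : ∃ p : G.Walk a b, ∀ z ∈ p.support, z ∈ s ∧ z ∉ S.erase x := by
      by_contra hno
      have hsep' : Sep (S.erase x) :=
        ⟨(S.erase_subset x).trans hSs, fun h => haS (Finset.mem_of_mem_erase h),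
          fun h => hbS (Finset.mem_of_mem_erase h), hno⟩
      have h1 := hminS _ hsep'
      have h2 := Finset.card_erase_lt_of_mem hxS
      omega
    obtain ⟨p, hp⟩ := hex
    have hxp : x ∈ p.support := by
      by_contra hxp
      refine hSsep ⟨p, fun z hz => ⟨(hp z hz).1, fun hzS => ?_⟩⟩
      have hzx : z = x := by
        by_contra hzx
        exact (hp z hz).2 (Finset.mem_erase.mpr ⟨hzx, hzS⟩)
      exact hxp (hzx ▸ hz)
    obtain ⟨y1, hy1, w1, hw1⟩ := hside x hxS a b p haS hp hxp
    have hxp' : x ∈ p.reverse.support := by rwa [Walk.support_reverse, List.mem_reverse]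
    obtain ⟨y2, hy2, w2, hw2⟩ := hside x hxS b a p.reverse hbS
      (fun z hz => hp z (by rwa [Walk.support_reverse, List.mem_reverse] at hz)) hxp'
    exact ⟨⟨y1, ⟨w1, hw1⟩, hy1⟩, ⟨y2, ⟨w2, hw2⟩, hy2⟩⟩
  -- S is a clique
  have hclique : ∀ x ∈ S, ∀ z ∈ S, x ≠ z → G.Adj x z := by
    intro x hxS z hzS hxz
    by_contra hnxz
    obtain ⟨⟨yA, hyA, hxyA⟩, ⟨yB, hyB, hxyB⟩⟩ := hnbr x hxS
    obtain ⟨⟨zA, hzA, hzzA⟩, ⟨zB, hzB, hzzB⟩⟩ := hnbr z hzS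
    have hxA : x ∉ A := fun h => (hAs x h).2 hxS
    have hzA' : z ∉ A := fun h => (hAs z h).2 hzS
    have hxB : x ∉ B := fun h => (hBs x h).2 hxS
    have hzB' : z ∉ B := fun h => (hBs z h).2 hzS
    -- a walk from x to z through A
    have hexA : ∃ w : G.Walk x z, ∀ v ∈ w.support, v ∈ insert x (insert z A) := by
      obtain ⟨w1, hw1⟩ := hyA
      obtain ⟨w2, hw2⟩ := hzA
      refine ⟨Walk.cons hxyA ((w1.reverse.append w2).concat hzzA.symm), ?_⟩
      intro v hv
      rw [Walk.support_cons, List.mem_cons] at hv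
      rcases hv with rfl | hv
      · exact Set.mem_insert _ _
      rw [Walk.support_concat, List.mem_append] at hv
      rcases hv with hv | hv
      · rw [Walk.mem_support_append_iff] at hv
        rcases hv with hv | hv
        · rw [Walk.support_reverse, List.mem_reverse] at hv
          exact Set.mem_insert_iff.mpr (Or.inr (Set.mem_insert_iff.mpr
            (Or.inr (hAall yA w1 hw1 v hv))))
        · exact Set.mem_insert_iff.mpr (Or.inr (Set.mem_insert_iff.mpr
            (Or.inr (hAall zA w2 hw2 v hv))))
      · simp only [List.mem_singleton] at hv
        subst hv
        exact Set.mem_insert_iff.mpr (Or.inr (Set.mem_insert _ _))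
    have hexB : ∃ w : G.Walk x z, ∀ v ∈ w.support, v ∈ insert x (insert z B) := by
      obtain ⟨w1, hw1⟩ := hyB
      obtain ⟨w2, hw2⟩ := hzB
      refine ⟨Walk.cons hxyB ((w1.reverse.append w2).concat hzzB.symm), ?_⟩
      intro v hv
      rw [Walk.support_cons, List.mem_cons] at hv
      rcases hv with rfl | hv
      · exact Set.mem_insert _ _
      rw [Walk.support_concat, List.mem_append] at hv
      rcases hv with hv | hv
      · rw [Walk.mem_support_append_iff] at hv
        rcases hv with hv | hv
        · rw [Walk.support_reverse, List.mem_reverse] at hv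
          exact Set.mem_insert_iff.mpr (Or.inr (Set.mem_insert_iff.mpr
            (Or.inr (hBall yB w1 hw1 v hv))))
        · exact Set.mem_insert_iff.mpr (Or.inr (Set.mem_insert_iff.mpr
            (Or.inr (hBall zB w2 hw2 v hv))))
      · simp only [List.mem_singleton] at hv
        subst hv
        exact Set.mem_insert_iff.mpr (Or.inr (Set.mem_insert _ _))
    obtain ⟨pA, hpA_path, hpA_X, hpA_min⟩ := aux_exists_min_path _ hexA
    obtain ⟨pB, hpB_path, hpB_X, hpB_min⟩ := aux_exists_min_path _ hexB
    -- both paths have length at least 2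
    have hlen2 : ∀ (p : G.Walk x z), p.IsPath → 2 ≤ p.length := by
      intro p hp
      by_contra hlt
      push_neg at hlt
      interval_cases hl : p.length
      · exact hxz (Walk.eq_of_length_eq_zero hl)
      · have hnn : ¬ p.Nil := by rw [Walk.nil_iff_length_eq, hl]; omega
        have hmem := aux_first_edge_mem (G := G) hnn
        have hgv : p.getVert 1 = z := by
          conv_lhs => rw [← hl]
          exact Walk.getVert_length _
        rw [hgv] at hmem
        exact hnxz (p.adj_of_mem_edges hmem)
    have hlA := hlen2 pA hpA_path
    have hlB := hlen2 pB hpB_path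
    set C := pA.append pB.reverse with hC
    have hlenC : C.length = pA.length + pB.length := by
      rw [hC, Walk.length_append, Walk.length_reverse]
    have hsuppB' : ∀ v, v ∈ pB.reverse.support ↔ v ∈ pB.support := by
      intro v; rw [Walk.support_reverse, List.mem_reverse]
    have hsuppC : ∀ v ∈ C.support, v ∈ pA.support ∨ v ∈ pB.support := by
      intro v hv
      rw [hC, Walk.mem_support_append_iff] at hv
      rcases hv with hv | hv
      · exact Or.inl hv
      · exact Or.inr ((hsuppB' v).mp hv)
    have hxint : ∀ v, v ∈ pA.support → v ∈ pB.support → v = x ∨ v = z := by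
      intro v h1 h2
      rcases Set.mem_insert_iff.mp (hpA_X v h1) with h | h
      · exact Or.inl h
      rcases Set.mem_insert_iff.mp h with h | h
      · exact Or.inr h
      rcases Set.mem_insert_iff.mp (hpB_X v h2) with h' | h'
      · exact Or.inl h'
      rcases Set.mem_insert_iff.mp h' with h' | h'
      · exact Or.inr h'
      · exact (hAB v h h').elim
    have hdisj : ∀ e ∈ pA.edges, e ∉ pB.edges := by
      intro e
      refine Sym2.ind (fun c d => ?_) e
      intro heA heB
      have hcA := pA.fst_mem_support_of_mem_edges heA
      have hcB := pB.fst_mem_support_of_mem_edges heB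
      have hdA := pA.snd_mem_support_of_mem_edges heA
      have hdB := pB.snd_mem_support_of_mem_edges heB
      have hadj := pA.adj_of_mem_edges heA
      rcases hxint c hcA hcB with rfl | rfl <;> rcases hxint d hdA hdB with rfl | rfl
      · exact hadj.ne rfl
      · exact hnxz hadj
      · exact hnxz hadj.symm
      · exact hadj.ne rfl
    have htrail : C.IsTrail := by
      rw [Walk.isTrail_def, hC, Walk.edges_append]
      refine List.Nodup.append hpA_path.isTrail.edges_nodup ?_ ?_
      · rw [Walk.edges_reverse]
        exact List.nodup_reverse.mpr hpB_path.isTrail.edges_nodup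
      · intro e heA heB
        rw [Walk.edges_reverse, List.mem_reverse] at heB
        exact hdisj e heA heB
    have htail : C.support.tail.Nodup := by
      rw [hC, Walk.tail_support_append]
      refine List.Nodup.append hpA_path.support_nodup.tail
        hpB_path.reverse.support_nodup.tail ?_
      intro v hvA hvB
      have hv1 : v ∈ pA.support := List.mem_of_mem_tail hvA
      have hv2 : v ∈ pB.support := (hsuppB' v).mp (List.mem_of_mem_tail hvB)
      rcases hxint v hv1 hv2 with rfl | rfl
      · have hnd := hpA_path.support_nodup
        rw [pA.support_eq_cons] at hnd
        exact (List.nodup_cons.mp hnd).1 hvA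
      · have hnd := hpB_path.reverse.support_nodup
        rw [pB.reverse.support_eq_cons] at hnd
        exact (List.nodup_cons.mp hnd).1 hvB
    have hCne : C ≠ Walk.nil := by
      intro h
      have h0 : C.length = 0 := by rw [h]; rfl
      omega
    have hcyc : C.IsCycle := by
      rw [Walk.isCycle_def]
      exact ⟨htrail, hCne, htail⟩
    obtain ⟨u, w, huC, hwC, huw, hne⟩ := hG x C hcyc (by omega)
    have hmemCedges : ∀ e, e ∈ pA.edges ∨ e ∈ pB.edges → e ∈ C.edges := by
      intro e h
      rw [hC, Walk.edges_append, List.mem_append]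
      rcases h with h | h
      · exact Or.inl h
      · right; rw [Walk.edges_reverse, List.mem_reverse]; exact h
    have cross : ∀ u w : V, u ∈ pA.support → w ∈ pB.support → u ∉ pB.support →
        w ∉ pA.support → G.Adj u w → False := by
      intro u w huA hwB huB hwA hadj
      have huA' : u ∈ A := by
        rcases Set.mem_insert_iff.mp (hpA_X u huA) with h | h
        · exact absurd (by rw [h]; exact pB.start_mem_support) huB
        rcases Set.mem_insert_iff.mp h with h | h
        · exact absurd (by rw [h]; exact pB.end_mem_support) huB
        · exact h
      have hwB' : w ∈ B := by
        rcases Set.mem_insert_iff.mp (hpB_X w hwB) with h | h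
        · exact absurd (by rw [h]; exact pA.start_mem_support) hwA
        rcases Set.mem_insert_iff.mp h with h | h
        · exact absurd (by rw [h]; exact pA.end_mem_support) hwA
        · exact h
      exact hAB w (hAclose u huA' w hadj (hBs w hwB').1 (hBs w hwB').2) hwB'
    rcases hsuppC u huC with huA | huB <;> rcases hsuppC w hwC with hwA | hwB
    · exact hne (hmemCedges _ (Or.inl (aux_min_path_chord hpA_X hpA_min huA hwA huw)))
    · by_cases h1 : u ∈ pB.support
      · exact hne (hmemCedges _ (Or.inr (aux_min_path_chord hpB_X hpB_min h1 hwB huw)))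
      · by_cases h2 : w ∈ pA.support
        · exact hne (hmemCedges _ (Or.inl (aux_min_path_chord hpA_X hpA_min huA h2 huw)))
        · exact cross u w huA hwB h1 h2 huw
    · by_cases h1 : w ∈ pB.support
      · exact hne (hmemCedges _ (Or.inr (aux_min_path_chord hpB_X hpB_min huB h1 huw)))
      · by_cases h2 : u ∈ pA.support
        · exact hne (hmemCedges _ (Or.inl (aux_min_path_chord hpA_X hpA_min h2 hwA huw)))
        · exact cross w u hwA huB h1 h2 huw.symm
    · exact hne (hmemCedges _ (Or.inr (aux_min_path_chord hpB_X hpB_min huB hwB huw)))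
  -- extract a simplicial vertex from a component side
  have getsimp : ∀ (C : Set V) (c₀ bex : V), c₀ ∈ C →
      (∀ v ∈ C, v ∈ s ∧ v ∉ S) →
      (∀ v ∈ C, ∀ z, G.Adj v z → z ∈ s → z ∉ S → z ∈ C) →
      bex ∈ s → bex ∉ C → bex ∉ S →
      ∃ v, v ∈ C ∧ SimpIn G s v := by
    intro C c₀ bex hc₀ hCs hCclose hbs hbC hbS'
    set sC : Finset V := s.filter (· ∈ C) ∪ S with hsC
    have hsCsub : sC ⊆ s.erase bex := by
      intro v hv
      rw [Finset.mem_union] at hv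
      rcases hv with hv | hv
      · rw [Finset.mem_filter] at hv
        exact Finset.mem_erase.mpr ⟨fun h => hbC (h ▸ hv.2), hv.1⟩
      · exact Finset.mem_erase.mpr ⟨fun h => hbS' (h ▸ hv), hSs hv⟩
    have hcard' : sC.card < n := by
      have h1 := Finset.card_le_card hsCsub
      have h2 : (s.erase bex).card < s.card := Finset.card_erase_lt_of_mem hbs
      omega
    have hCin : ∀ u ∈ C, u ∈ sC :=
      fun u hu => Finset.mem_union_left _ (Finset.mem_filter.mpr ⟨(hCs u hu).1, hu⟩)
    have hSin : ∀ u ∈ S, u ∈ sC := fun u hu => Finset.mem_union_right _ hu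
    have hup : ∀ v ∈ C, SimpIn G sC v → SimpIn G s v := by
      intro v hv hsimp u hu w hw a1 a2 hne
      have hu' : u ∈ sC := by
        by_cases h : u ∈ S
        · exact hSin u h
        · exact hCin u (hCclose v hv u a1 hu h)
      have hw' : w ∈ sC := by
        by_cases h : w ∈ S
        · exact hSin w h
        · exact hCin w (hCclose v hv w a2 hw h)
      exact hsimp u hu' w hw' a1 a2 hne
    rcases ih sC.card hcard' sC rfl with hcomp' | ⟨v, hv, w, hw, hvw, hnadj', hs1, hs2⟩
    · refine ⟨c₀, hc₀, hup c₀ hc₀ ?_⟩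
      intro u hu w hw a1 a2 hne
      exact hcomp' u hu w hw hne
    · by_cases hvS : v ∈ S
      · have hwS : w ∉ S := fun hwS => hnadj' (hclique v hvS w hwS hvw)
        have hwC : w ∈ C := by
          rcases Finset.mem_union.mp hw with h | h
          · exact (Finset.mem_filter.mp h).2
          · exact absurd h hwS
        exact ⟨w, hwC, hup w hwC hs2⟩
      · have hvC : v ∈ C := by
          rcases Finset.mem_union.mp hv with h | h
          · exact (Finset.mem_filter.mp h).2
          · exact absurd h hvS
        exact ⟨v, hvC, hup v hvC hs1⟩
  obtain ⟨vA, hvA, hsimpA⟩ := getsimp A a b haA hAs hAclose hb (fun h => hAB b h hbB) hbS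
  obtain ⟨vB, hvB, hsimpB⟩ := getsimp B b a hbB hBs hBclose ha (fun h => hAB a haA h) haS
  have hvAB : ¬ G.Adj vA vB := by
    intro h
    exact hAB vB (hAclose vA hvA vB h (hBs vB hvB).1 (hBs vB hvB).2) hvB
  exact ⟨vA, (hAs vA hvA).1, vB, (hBs vB hvB).1, fun h => hAB vA hvA (h ▸ hvB), hvAB,
    hsimpA, hsimpB⟩

lemma aux_simplicial [DecidableEq V] (hG : G.IsChordal) (s : Finset V) (hs : s.Nonempty) :
    ∃ v ∈ s, SimpIn G s v := by
  rcases aux_dirac hG s.card s rfl with hcomp | ⟨v, hv, w, hw, h1, h2, h3, h4⟩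
  · obtain ⟨v, hv⟩ := hs
    exact ⟨v, hv, fun u hu w hw _ _ hne => hcomp u hu w hw hne⟩
  · exact ⟨v, hv, h3⟩

lemma aux_peo_list [DecidableEq V] (hG : G.IsChordal) :
    ∀ (n : ℕ) (s : Finset V), s.card = n →
    ∃ l : List V, l.Nodup ∧ l.toFinset = s ∧
      ∀ (i j k : ℕ) (hi : i < l.length) (hj : j < l.length) (hk : k < l.length),
        i < j → i < k → j ≠ k → G.Adj l[i] l[j] → G.Adj l[i] l[k] → G.Adj l[j] l[k] := by
  intro n
  induction n with
  | zero =>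
    intro s hs
    refine ⟨[], by simp, by simpa using (Finset.card_eq_zero.mp hs).symm, ?_⟩
    intro i j k hi
    simp at hi
  | succ n ih =>
    intro s hs
    have hne : s.Nonempty := by rw [← Finset.card_pos, hs]; omega
    obtain ⟨v, hv, hsimp⟩ := aux_simplicial hG s hne
    obtain ⟨l, hnd, htf, hprop⟩ := ih (s.erase v) (by rw [Finset.card_erase_of_mem hv, hs]; omega)
    have hvl : v ∉ l := by
      rw [← List.mem_toFinset, htf]
      simp
    refine ⟨v :: l, List.nodup_cons.mpr ⟨hvl, hnd⟩,
      by rw [List.toFinset_cons, htf, Finset.insert_erase hv], ?_⟩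
    intro i j k hi hj hk hij hik hjk a1 a2
    obtain ⟨j', rfl⟩ : ∃ j', j = j' + 1 := ⟨j - 1, by omega⟩
    obtain ⟨k', rfl⟩ : ∃ k', k = k' + 1 := ⟨k - 1, by omega⟩
    have hj' : j' < l.length := by simpa using hj
    have hk' : k' < l.length := by simpa using hk
    cases i with
    | zero =>
      simp only [List.getElem_cons_zero, List.getElem_cons_succ] at a1 a2 ⊢
      have hjl : l[j'] ∈ s := by
        have hm : l[j'] ∈ l := List.getElem_mem _
        rw [← List.mem_toFinset, htf] at hm
        exact Finset.mem_of_mem_erase hm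
      have hkl : l[k'] ∈ s := by
        have hm : l[k'] ∈ l := List.getElem_mem _
        rw [← List.mem_toFinset, htf] at hm
        exact Finset.mem_of_mem_erase hm
      have hnejk : l[j'] ≠ l[k'] := by
        intro h
        have := (List.Nodup.getElem_inj_iff hnd).mp h
        omega
      exact hsimp _ hjl _ hkl a1 a2 hnejk
    | succ i' =>
      simp only [List.getElem_cons_succ] at a1 a2 ⊢
      exact hprop i' j' k' (by simpa using hi) hj' hk' (by omega) (by omega) (by omega) a1 a2

lemma chordal_to_peo [Fintype V] [DecidableEq V] (hG : G.IsChordal) :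
    ∃ e : Fin (Fintype.card V) ≃ V,
      ∀ i j k : Fin (Fintype.card V), i < j → i < k → j ≠ k →
        G.Adj (e i) (e j) → G.Adj (e i) (e k) → G.Adj (e j) (e k) := by
  obtain ⟨l, hnd, htf, hprop⟩ := aux_peo_list hG Finset.univ.card Finset.univ rfl
  have hmeml : ∀ x : V, x ∈ l := by
    intro x
    rw [← List.mem_toFinset, htf]
    exact Finset.mem_univ x
  have hlen : l.length = Fintype.card V := by
    rw [← List.toFinset_card_of_nodup hnd, htf, Finset.card_univ]
  refine ⟨(finCongr hlen.symm).trans (List.Nodup.getEquivOfForallMemList l hnd hmeml), ?_⟩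
  intro i j k hij hik hjk a1 a2
  simp only [Equiv.trans_apply, finCongr_apply, List.Nodup.getEquivOfForallMemList_apply,
    Fin.coe_cast, List.get_eq_getElem] at a1 a2 ⊢
  exact hprop i j k (by omega) (by omega) (by omega) hij hik (by simpa [Fin.ext_iff] using hjk)
    a1 a2

end Aux

/-- A finite simple graph is chordal iff it has a perfect elimination
ordering: an enumeration `e` of the vertices such that, for each `i`, the vertex `e i`
together with its later neighbours induces a complete graph. -/
theorem chordal_iff_perfect_elimination_ordering {V : Type} [Fintype V] [DecidableEq V]
    (G : SimpleGraph V) :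
    G.IsChordal ↔ ∃ e : Fin (Fintype.card V) ≃ V,
      ∀ i j k : Fin (Fintype.card V), i < j → i < k → j ≠ k →
        G.Adj (e i) (e j) → G.Adj (e i) (e k) → G.Adj (e j) (e k) := by
  constructor
  · exact fun hG => chordal_to_peo hG
  · rintro ⟨e, he⟩
    exact peo_to_chordal G e he
end

section
/- Suppose for every pair of vertices x, y of G with dist(x,y) ≥ g, every finite S ⊆ V(G), and all configurations α on {x}, β on {y}, σ on S with ασ and σβ globally admissible, the configuration ασβ is globally admissible. Then Hom(G,H) satisfies TSSM with gap g (for arbitrary finite sets A and B in place of {x} and {y}). -/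
private lemma tssm_step1 {VG VH : Type} [Fintype VH] (G : LoopyGraph VG) (H : LoopyGraph VH) (g : ℕ)
    (hsing : ∀ x y : VG, G.DistGe {x} {y} g → ∀ S : Set VG, S.Finite →
      ∀ α σ β : VG → VH,
        (∃ ω, G.IsHom H ω ∧ ω x = α x ∧ ∀ z ∈ S, ω z = σ z) →
        (∃ ω, G.IsHom H ω ∧ (∀ z ∈ S, ω z = σ z) ∧ ω y = β y) →
        ∃ ω, G.IsHom H ω ∧ ω x = α x ∧ (∀ z ∈ S, ω z = σ z) ∧ ω y = β y) :
    ∀ B : Set VG, B.Finite → ∀ (x : VG) (S : Set VG), S.Finite → G.DistGe {x} B g →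
      ∀ α σ β : VG → VH,
        (∃ ω, G.IsHom H ω ∧ ω x = α x ∧ ∀ z ∈ S, ω z = σ z) →
        (∃ ω, G.IsHom H ω ∧ (∀ z ∈ S, ω z = σ z) ∧ ∀ z ∈ B, ω z = β z) →
        ∃ ω, G.IsHom H ω ∧ ω x = α x ∧ (∀ z ∈ S, ω z = σ z) ∧ ∀ z ∈ B, ω z = β z := by
  intro B hB
  refine Set.Finite.induction_on B hB ?_ ?_
  · intro x S hS hdist α σ β h1 _
    obtain ⟨ω, hω, hx, hσ⟩ := h1
    exact ⟨ω, hω, hx, hσ, by simp⟩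
  · rintro b B' hbB' hB' IH
    intro x S hS hdist α σ β h1 h2
    obtain ⟨ω₂, hω₂, hω₂σ, hω₂β⟩ := h2
    obtain ⟨ω₃, hω₃, hω₃x, hω₃σ, hω₃β⟩ :=
      IH x S hS (fun p hp q hq => hdist p hp q (Set.mem_insert_of_mem _ hq)) α σ β h1
        ⟨ω₂, hω₂, hω₂σ, fun z hz => hω₂β z (Set.mem_insert_of_mem _ hz)⟩
    have hdxb : G.DistGe {x} {b} g := by
      intro p hp q hq
      rcases hp with rfl
      rcases hq with rfl
      exact hdist p rfl _ (Set.mem_insert _ _)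
    obtain ⟨ω, hω, hωx, hωσ', hωb⟩ :=
      hsing x b hdxb (S ∪ B') (hS.union hB') α ω₃ β
        ⟨ω₃, hω₃, hω₃x, fun z _ => rfl⟩
        ⟨ω₂, hω₂, fun z hz => by
          rcases hz with hz | hz
          · rw [hω₂σ z hz, hω₃σ z hz]
          · rw [hω₂β z (Set.mem_insert_of_mem _ hz), hω₃β z hz],
          hω₂β b (Set.mem_insert _ _)⟩
    refine ⟨ω, hω, hωx, fun z hz => by rw [hωσ' z (Or.inl hz), hω₃σ z hz], fun z hz => ?_⟩
    rcases hz with rfl | hz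
    · exact hωb
    · rw [hωσ' z (Or.inr hz), hω₃β z hz]

private lemma tssm_step2 {VG VH : Type} [Fintype VH] (G : LoopyGraph VG) (H : LoopyGraph VH) (g : ℕ)
    (hsing : ∀ x y : VG, G.DistGe {x} {y} g → ∀ S : Set VG, S.Finite →
      ∀ α σ β : VG → VH,
        (∃ ω, G.IsHom H ω ∧ ω x = α x ∧ ∀ z ∈ S, ω z = σ z) →
        (∃ ω, G.IsHom H ω ∧ (∀ z ∈ S, ω z = σ z) ∧ ω y = β y) →
        ∃ ω, G.IsHom H ω ∧ ω x = α x ∧ (∀ z ∈ S, ω z = σ z) ∧ ω y = β y) :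
    ∀ A : Set VG, A.Finite → ∀ (B S : Set VG), B.Finite → S.Finite → G.DistGe A B g →
      ∀ α σ β : VG → VH,
        (∃ ω, G.IsHom H ω ∧ (∀ x ∈ A, ω x = α x) ∧ (∀ x ∈ S, ω x = σ x)) →
        (∃ ω, G.IsHom H ω ∧ (∀ x ∈ S, ω x = σ x) ∧ (∀ x ∈ B, ω x = β x)) →
        ∃ ω, G.IsHom H ω ∧ (∀ x ∈ A, ω x = α x) ∧ (∀ x ∈ S, ω x = σ x) ∧
          ∀ x ∈ B, ω x = β x := by
  intro A hA
  refine Set.Finite.induction_on A hA ?_ ?_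
  · intro B S hB hS hdist α σ β _ h2
    obtain ⟨ω, hω, hσ, hβ⟩ := h2
    exact ⟨ω, hω, by simp, hσ, hβ⟩
  · rintro a A' haA' hA' IH
    intro B S hB hS hdist α σ β h1 h2
    obtain ⟨ω₁, hω₁, hω₁α, hω₁σ⟩ := h1
    have hdaB : G.DistGe {a} B g := by
      intro p hp q hq
      rcases hp with rfl
      exact hdist p (Set.mem_insert _ _) q hq
    obtain ⟨ω₄, hω₄, hω₄a, hω₄σ, hω₄β⟩ :=
      tssm_step1 G H g hsing B hB a S hS hdaB ω₁ σ β
        ⟨ω₁, hω₁, rfl, hω₁σ⟩ h2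
    obtain ⟨ω, hω, hωα, hωσ', hωβ⟩ :=
      IH B (insert a S) hB (hS.insert a)
        (fun p hp => hdist p (Set.mem_insert_of_mem _ hp)) α ω₁ β
        ⟨ω₁, hω₁, fun z hz => hω₁α z (Set.mem_insert_of_mem _ hz), fun z _ => rfl⟩
        ⟨ω₄, hω₄, fun z hz => by
          rcases hz with rfl | hz
          · exact hω₄a
          · rw [hω₄σ z hz, hω₁σ z hz], hω₄β⟩
    refine ⟨ω, hω, fun z hz => ?_, fun z hz => ?_, hωβ⟩
    · rcases hz with rfl | hz
      · rw [hωσ' z (Set.mem_insert _ _), hω₁α z (Set.mem_insert _ _)]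
      · exact hωα z hz
    · rw [hωσ' z (Set.mem_insert_of_mem _ hz), hω₁σ z hz]

/-- If the TSSM gluing condition with gap `g` holds for pairs of single
vertices `x, y` (against arbitrary finite `S`), then `Hom(G, H)` satisfies TSSM with gap `g`
for arbitrary finite sets `A` and `B`. -/
theorem TSSM_of_singletons {VG VH : Type} [Fintype VH] (G : LoopyGraph VG) (H : LoopyGraph VH)
    (hG : G.IsBoard) (g : ℕ)
    (hsing : ∀ x y : VG, G.DistGe {x} {y} g → ∀ S : Set VG, S.Finite →
      ∀ α σ β : VG → VH,
        (∃ ω, G.IsHom H ω ∧ ω x = α x ∧ ∀ z ∈ S, ω z = σ z) →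
        (∃ ω, G.IsHom H ω ∧ (∀ z ∈ S, ω z = σ z) ∧ ω y = β y) →
        ∃ ω, G.IsHom H ω ∧ ω x = α x ∧ (∀ z ∈ S, ω z = σ z) ∧ ω y = β y) :
    G.TSSM H g :=
  fun A B S hA hB hS hdist => tssm_step2 G H g hsing A hA B S hB hS hdist
end

section
/- Let T be a finite nontrivial looped tree (a tree plus possibly some loops, with at least 2 vertices). If T is dismantlable, then the set Loop(T) of looped vertices of T is nonempty and induces a connected subgraph of T. -/
/-- A graph, possibly with loops: a symmetric relation on vertices. -/
structure LoopedGraph (V : Type*) where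
  Adj : V → V → Prop
  symm : ∀ {u v : V}, Adj u v → Adj v u

namespace LoopedGraph

variable {VG VH : Type*}

/-- `G.ReachIn n x y`: there is a walk of length exactly `n` from `x` to `y`. -/
def ReachIn (G : LoopedGraph VG) : ℕ → VG → VG → Prop
  | 0, x, y => x = y
  | n + 1, x, y => ∃ z, G.Adj x z ∧ G.ReachIn n z y

/-- `dist(A, B) ≥ g`: no walk of length `< g` connects a point of `A` to a point of `B`. -/
def DistGe (G : LoopedGraph VG) (A B : Set VG) (g : ℕ) : Prop :=
  ∀ x ∈ A, ∀ y ∈ B, ∀ n < g, ¬ G.ReachIn n x y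

/-- A graph homomorphism from `G` to `H`. -/
def IsHom (G : LoopedGraph VG) (H : LoopedGraph VH) (f : VG → VH) : Prop :=
  ∀ ⦃x y : VG⦄, G.Adj x y → H.Adj (f x) (f y)

/-- `f` is a graph homomorphism on the subgraph of `G` induced by `S` (local admissibility). -/
def IsHomOn (G : LoopedGraph VG) (H : LoopedGraph VH) (f : VG → VH) (S : Set VG) : Prop :=
  ∀ ⦃x⦄, x ∈ S → ∀ ⦃y⦄, y ∈ S → G.Adj x y → H.Adj (f x) (f y)

/-- The configuration `α|_A` is globally admissible: it extends to a point of `Hom(G,H)`. -/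
def GlobAdm (G : LoopedGraph VG) (H : LoopedGraph VH) (A : Set VG) (α : VG → VH) : Prop :=
  ∃ ω : VG → VH, G.IsHom H ω ∧ ∀ x ∈ A, ω x = α x

/-- A board: countable, simple, connected, locally finite, with at least two vertices. -/
structure IsBoard (G : LoopedGraph VG) : Prop where
  countable : Countable VG
  simple : ∀ v : VG, ¬ G.Adj v v
  connected : ∀ x y : VG, ∃ n : ℕ, G.ReachIn n x y
  locallyFinite : ∀ v : VG, {w : VG | G.Adj v w}.Finite
  nontrivial : Nontrivial VG

/-- Single-site fillability of `Hom(G, H)`. -/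
def SSF (G : LoopedGraph VG) (H : LoopedGraph VH) : Prop :=
  ∀ (x : VG) (B : Set VG), B ⊆ {y : VG | G.Adj x y} →
    ∀ β : VG → VH, G.IsHomOn H β B →
      ∃ α : VG → VH, G.IsHomOn H α (insert x B) ∧ ∀ y ∈ B, α y = β y

/-- Topological strong spatial mixing with gap `g`. -/
def TSSM (G : LoopedGraph VG) (H : LoopedGraph VH) (g : ℕ) : Prop :=
  ∀ (A B S : Set VG), A.Finite → B.Finite → S.Finite → G.DistGe A B g →
    ∀ α σ β : VG → VH,
      (∃ ω, G.IsHom H ω ∧ (∀ x ∈ A, ω x = α x) ∧ (∀ x ∈ S, ω x = σ x)) →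
      (∃ ω, G.IsHom H ω ∧ (∀ x ∈ S, ω x = σ x) ∧ (∀ x ∈ B, ω x = β x)) →
      ∃ ω, G.IsHom H ω ∧ (∀ x ∈ A, ω x = α x) ∧ (∀ x ∈ S, ω x = σ x) ∧
        ∀ x ∈ B, ω x = β x

/-- Strong irreducibility with gap `g`. -/
def StrongIrred (G : LoopedGraph VG) (H : LoopedGraph VH) (g : ℕ) : Prop :=
  ∀ (A B : Set VG), A.Finite → B.Finite → A.Nonempty → B.Nonempty → Disjoint A B →
    G.DistGe A B g → ∀ α β : VG → VH,
      G.GlobAdm H A α → G.GlobAdm H B β →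
      ∃ ω, G.IsHom H ω ∧ (∀ x ∈ A, ω x = α x) ∧ ∀ x ∈ B, ω x = β x

end LoopedGraph

namespace LoopedGraph

/-- The simple graph obtained from `G` by deleting all loops. -/
def loopless {V : Type*} (G : LoopedGraph V) : SimpleGraph V where
  Adj u v := u ≠ v ∧ G.Adj u v
  symm := ⟨fun u v h => ⟨Ne.symm h.1, G.symm h.2⟩⟩
  loopless := ⟨fun v h => h.1 rfl⟩

/-- The subgraph of `G` induced by a set `S` of vertices. -/
def induce {V : Type*} (G : LoopedGraph V) (S : Set V) : LoopedGraph S :=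
  ⟨fun a b => G.Adj a.1 b.1, fun {_ _} h => G.symm h⟩

/-- A graph is loop-chordal if every vertex has a loop and its loopless version is chordal. -/
def LoopChordal {V : Type*} (G : LoopedGraph V) : Prop :=
  (∀ v, G.Adj v v) ∧ G.loopless.IsChordal

end LoopedGraph

namespace LoopedGraph

/-- The subgraph of `G` induced on `S` can be reduced to a single vertex by folds. -/
inductive DismOn {V : Type*} [DecidableEq V] (G : LoopedGraph V) : Finset V → Prop
  | single (v : V) : DismOn G {v}
  | fold (S : Finset V) (u v : V) (hu : u ∈ S) (hv : v ∈ S) (huv : u ≠ v)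
      (habsorb : ∀ w ∈ S, G.Adj u w → G.Adj v w) (hrec : DismOn G (S.erase u)) :
      DismOn G S

/-- A finite graph is dismantlable if a sequence of folds reduces it to a single vertex. -/
def Dismantlable {V : Type*} [DecidableEq V] [Fintype V] (G : LoopedGraph V) : Prop :=
  DismOn G Finset.univ

end LoopedGraph

section Aux

open SimpleGraph

variable {V : Type} [DecidableEq V]

/-- Every vertex of a walk's `getVert` is in its support. -/
lemma aux_getVert_mem_support {G : SimpleGraph V} {u v : V} (p : G.Walk u v) (i : ℕ) :
    p.getVert i ∈ p.support := by
  induction p generalizing i with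
  | nil => cases i <;> simp [SimpleGraph.Walk.getVert]
  | cons h q ih =>
    cases i with
    | zero => simp [SimpleGraph.Walk.getVert]
    | succ n =>
      rw [SimpleGraph.Walk.getVert_cons_succ]
      simp only [SimpleGraph.Walk.support_cons, List.mem_cons]
      exact Or.inr (ih n)

/-- `getVert` is injective on `[0, length]` for a path. -/
lemma aux_getVert_inj {G : SimpleGraph V} {u v : V} {p : G.Walk u v} (hp : p.IsPath) :
    ∀ i ≤ p.length, ∀ j ≤ p.length, p.getVert i = p.getVert j → i = j := by
  induction p with
  | nil =>
    intro i hi j hj _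
    simp only [SimpleGraph.Walk.length_nil, Nat.le_zero] at hi hj
    omega
  | cons h q ih =>
    intro i hi j hj hij
    have hq : q.IsPath := hp.of_cons
    have hns := ((SimpleGraph.Walk.cons_isPath_iff _ _).mp hp).2
    cases i with
    | zero =>
      cases j with
      | zero => rfl
      | succ m =>
        rw [SimpleGraph.Walk.getVert_zero, SimpleGraph.Walk.getVert_cons_succ] at hij
        exact absurd (hij ▸ aux_getVert_mem_support q m) hns
    | succ n =>
      cases j with
      | zero =>
        rw [SimpleGraph.Walk.getVert_zero, SimpleGraph.Walk.getVert_cons_succ] at hij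
        exact absurd (hij ▸ aux_getVert_mem_support q n) hns
      | succ m =>
        rw [SimpleGraph.Walk.getVert_cons_succ, SimpleGraph.Walk.getVert_cons_succ] at hij
        have := ih hq n (by simpa using hi) m (by simpa using hj) hij
        omega

/-- In an acyclic graph there is no triangle. -/
lemma aux_no_triangle {G : SimpleGraph V} (hac : G.IsAcyclic) {a b c : V}
    (hab : G.Adj a b) (hbc : G.Adj b c) (hac' : G.Adj a c) : False := by
  have hpath := SimpleGraph.isAcyclic_iff_path_unique.mp hac
  have h := hpath
    (⟨SimpleGraph.Walk.cons hac' SimpleGraph.Walk.nil, by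
      simp [SimpleGraph.Walk.isPath_def, hac'.ne]⟩ : G.Path a c)
    (⟨SimpleGraph.Walk.cons hab (SimpleGraph.Walk.cons hbc SimpleGraph.Walk.nil), by
      simp [SimpleGraph.Walk.isPath_def, hab.ne, hbc.ne, hac'.ne]⟩ : G.Path a c)
  have hlen := congrArg (fun q : G.Path a c => q.1.length) h
  simp at hlen

/-- In an acyclic graph there is no 4-cycle: two distinct vertices cannot have two distinct
common neighbors. -/
lemma aux_no_square {G : SimpleGraph V} (hac : G.IsAcyclic) {x y z w : V}
    (hxy : G.Adj x y) (hyz : G.Adj y z) (hxw : G.Adj x w) (hwz : G.Adj w z)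
    (hxz : x ≠ z) (hyw : y ≠ w) : False := by
  have hpath := SimpleGraph.isAcyclic_iff_path_unique.mp hac
  have h := hpath
    (⟨SimpleGraph.Walk.cons hxy (SimpleGraph.Walk.cons hyz SimpleGraph.Walk.nil), by
      simp [SimpleGraph.Walk.isPath_def, hxy.ne, hyz.ne, hxz]⟩ : G.Path x z)
    (⟨SimpleGraph.Walk.cons hxw (SimpleGraph.Walk.cons hwz SimpleGraph.Walk.nil), by
      simp [SimpleGraph.Walk.isPath_def, hxw.ne, hwz.ne, hxz]⟩ : G.Path x z)
  have hsup := congrArg (fun q : G.Path x z => q.1.support) h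
  simp at hsup
  exact hyw hsup

/-- Every vertex of a walk's support is some `getVert`. -/
lemma aux_support_getVert {G : SimpleGraph V} {u v w : V} (p : G.Walk u v)
    (hw : w ∈ p.support) : ∃ i ≤ p.length, p.getVert i = w := by
  induction p with
  | nil => simp at hw; exact ⟨0, by simp, by simp [hw]⟩
  | cons h q ih =>
    simp only [SimpleGraph.Walk.support_cons, List.mem_cons] at hw
    rcases hw with rfl | hw
    · exact ⟨0, by simp, by simp⟩
    · obtain ⟨i, hil, hiv⟩ := ih hw
      exact ⟨i + 1, by simp only [SimpleGraph.Walk.length_cons]; omega, by simpa using hiv⟩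

variable (T : LoopedGraph V)

/-- If `T.DismOn S` and every vertex of `S` has a `T`-neighbor in `S`, then some vertex
of `S` has a loop. -/
lemma aux_exists_loop {S : Finset V} (hd : T.DismOn S)
    (hnb : ∀ w ∈ S, ∃ z ∈ S, T.Adj w z) : ∃ v, T.Adj v v := by
  induction hd with
  | single v =>
    obtain ⟨z, hz, hadj⟩ := hnb v (Finset.mem_singleton_self v)
    rw [Finset.mem_singleton] at hz
    exact ⟨v, hz ▸ hadj⟩
  | fold S u v hu hv huv habsorb hrec ih =>
    apply ih
    intro w hw
    have hwS : w ∈ S := Finset.mem_of_mem_erase hw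
    obtain ⟨z, hz, hadj⟩ := hnb w hwS
    by_cases hzu : z = u
    · refine ⟨v, Finset.mem_erase.mpr ⟨huv.symm, hv⟩, ?_⟩
      exact T.symm (habsorb w hwS (T.symm (hzu ▸ hadj)))
    · exact ⟨z, Finset.mem_erase.mpr ⟨hzu, hz⟩, hadj⟩

/-- Barbell blocking: if `S` contains a barbell (a path with loops exactly at the two ends,
of length at least 2), then `T` cannot be dismantled on `S`. -/
lemma aux_barbell_block (hac : T.loopless.IsAcyclic) (p : ℕ → V) (k : ℕ) (hk : 2 ≤ k)
    (hadj : ∀ i < k, T.Adj (p i) (p (i + 1)))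
    (hinj : ∀ i ≤ k, ∀ j ≤ k, p i = p j → i = j)
    (h0 : T.Adj (p 0) (p 0)) (hkk : T.Adj (p k) (p k))
    (hmid : ∀ i, 0 < i → i < k → ¬T.Adj (p i) (p i)) :
    ∀ S : Finset V, T.DismOn S → ¬(∀ i ≤ k, p i ∈ S) := by
  intro S hd
  induction hd with
  | single x =>
    intro hS
    have h0' := Finset.mem_singleton.mp (hS 0 (Nat.zero_le _))
    have h1' := Finset.mem_singleton.mp (hS 1 (by omega))
    exact absurd (hinj 0 (by omega) 1 (by omega) (h0'.trans h1'.symm)) (by omega)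
  | fold S u v hu hv huv habsorb hrec ih =>
    intro hS
    -- First show `u` is not on the barbell.
    have hunp : ∀ i ≤ k, u ≠ p i := by
      intro i hik hui
      subst hui
      -- helper: `T.loopless.Adj` facts
      have hne : ∀ i ≤ k, ∀ j ≤ k, i ≠ j → p i ≠ p j := fun i hi j hj hij hpij =>
        hij (hinj i hi j hj hpij)
      rcases Nat.eq_zero_or_pos i with hi0 | hipos
      · subst hi0
        have hv0 : T.Adj v (p 0) := habsorb (p 0) (hS 0 (Nat.zero_le _)) h0
        have hv1 : T.Adj v (p 1) := habsorb (p 1) (hS 1 (by omega)) (hadj 0 (by omega))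
        by_cases hvp1 : v = p 1
        · exact hmid 1 (by omega) (by omega) (hvp1 ▸ hv1)
        · exact aux_no_triangle hac (G := T.loopless)
            ⟨Ne.symm huv, hv0⟩ ⟨hne 0 (by omega) 1 (by omega) (by omega), hadj 0 (by omega)⟩
            ⟨hvp1, hv1⟩
      rcases Nat.lt_or_ge i k with hik' | hik''
      · -- interior vertex
        have hi1 : i - 1 + 1 = i := by omega
        have hadja : T.Adj (p i) (p (i - 1)) := by
          have := hadj (i - 1) (by omega)
          rw [hi1] at this
          exact T.symm this
        have hadjb : T.Adj (p i) (p (i + 1)) := hadj i hik'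
        have hva : T.Adj v (p (i - 1)) := habsorb (p (i - 1)) (hS (i - 1) (by omega)) hadja
        have hvb : T.Adj v (p (i + 1)) := habsorb (p (i + 1)) (hS (i + 1) (by omega)) hadjb
        have hab : p (i - 1) ≠ p (i + 1) := hne (i - 1) (by omega) (i + 1) (by omega) (by omega)
        have hAa : T.loopless.Adj (p (i - 1)) (p i) :=
          ⟨hne (i - 1) (by omega) i (by omega) (by omega), T.symm hadja⟩
        have hAb : T.loopless.Adj (p i) (p (i + 1)) :=
          ⟨hne i (by omega) (i + 1) (by omega) (by omega), hadjb⟩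
        by_cases hva' : v = p (i - 1)
        · exact aux_no_triangle hac hAa hAb ⟨hab, hva' ▸ hvb⟩
        by_cases hvb' : v = p (i + 1)
        · exact aux_no_triangle hac hAa hAb (SimpleGraph.Adj.symm (G := T.loopless) ⟨Ne.symm hab, hvb' ▸ hva⟩)
        · exact aux_no_square hac hAa hAb
            (SimpleGraph.Adj.symm (G := T.loopless) ⟨hva', hva⟩) ⟨hvb', hvb⟩ hab huv
      · -- i = k
        have hik3 : i = k := by omega
        rw [hik3] at huv habsorb
        have hk1 : k - 1 + 1 = k := by omega
        have hadjk : T.Adj (p k) (p (k - 1)) := by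
          have := hadj (k - 1) (by omega)
          rw [hk1] at this
          exact T.symm this
        have hvk : T.Adj v (p k) := habsorb (p k) (hS k le_rfl) hkk
        have hvk1 : T.Adj v (p (k - 1)) := habsorb (p (k - 1)) (hS (k - 1) (by omega)) hadjk
        by_cases hvp : v = p (k - 1)
        · exact hmid (k - 1) (by omega) (by omega) (hvp ▸ hvk1)
        · exact aux_no_triangle hac (G := T.loopless)
            ⟨Ne.symm huv, hvk⟩ ⟨hne k le_rfl (k - 1) (by omega) (by omega), hadjk⟩
            ⟨hvp, hvk1⟩
    exact ih fun i hik => Finset.mem_erase.mpr ⟨fun h => hunp i hik h.symm, hS i hik⟩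

/-- If `T` is dismantlable (on `univ`) and `T.loopless` is acyclic, then every vertex on a
path between two looped vertices is looped. -/
lemma aux_path_all_looped [Fintype V] (hac : T.loopless.IsAcyclic) (hd : T.Dismantlable) :
    ∀ n (x y : V), T.Adj x x → T.Adj y y → ∀ p : T.loopless.Walk x y, p.IsPath →
      p.length ≤ n → ∀ v ∈ p.support, T.Adj v v := by
  intro n
  induction n with
  | zero =>
    intro x y hx _ p _ hlen v hv
    have : p.length = 0 := Nat.le_zero.mp hlen
    have hxy : x = y := SimpleGraph.Walk.eq_of_length_eq_zero this
    subst hxy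
    have : p = SimpleGraph.Walk.nil := SimpleGraph.Walk.nil_iff_eq_nil.mp (SimpleGraph.Walk.length_eq_zero_iff.mp this)
    subst this
    simp at hv
    exact hv ▸ hx
  | succ n ih =>
    intro x y hx hy p hp hlen v hv
    by_cases hloop : ∃ z ∈ p.support, z ≠ x ∧ z ≠ y ∧ T.Adj z z
    · -- split at an interior looped vertex
      obtain ⟨z, hz, hzx, hzy, hzz⟩ := hloop
      have htake := hp.takeUntil hz
      have hdrop := hp.dropUntil hz
      have hsplit := p.take_spec hz
      have hlensum : (p.takeUntil z hz).length + (p.dropUntil z hz).length = p.length := by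
        have := congrArg SimpleGraph.Walk.length hsplit
        rwa [SimpleGraph.Walk.length_append] at this
      have hlt : 1 ≤ (p.takeUntil z hz).length := by
        by_contra h
        exact hzx (SimpleGraph.Walk.eq_of_length_eq_zero
          (p := p.takeUntil z hz) (by omega)).symm
      have hld : 1 ≤ (p.dropUntil z hz).length := by
        by_contra h
        exact hzy (SimpleGraph.Walk.eq_of_length_eq_zero
          (p := p.dropUntil z hz) (by omega))
      have hmem : v ∈ (p.takeUntil z hz).support ∨ v ∈ (p.dropUntil z hz).support := by
        rw [← SimpleGraph.Walk.mem_support_append_iff, hsplit]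
        exact hv
      rcases hmem with hm | hm
      · exact ih x z hx hzz _ htake (by omega) v hm
      · exact ih z y hzz hy _ hdrop (by omega) v hm
    · -- no interior looped vertex: either short or a barbell
      push_neg at hloop
      rcases Nat.lt_or_ge p.length 2 with hshort | hlong
      · -- length ≤ 1: support ⊆ {x, y}
        by_cases hvx : v = x
        · exact hvx ▸ hx
        by_cases hvy : v = y
        · exact hvy ▸ hy
        · -- v is interior but length < 2 means no interior vertices; derive contradiction
          -- via getVert representation
          obtain ⟨i, hil, hiv⟩ := aux_support_getVert p hv
          rcases (by omega : i = 0 ∨ i = 1) with rfl | rfl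
          · exact absurd (by simpa using hiv.symm) hvx
          · have hl1 : p.length ≤ 1 := by omega
            have hgy : p.getVert 1 = y := p.getVert_of_length_le hl1
            exact absurd (hiv.symm.trans hgy) hvy
      · -- a barbell: contradiction with dismantlability
        exfalso
        have hxney : x ≠ y := by
          intro hxy
          subst hxy
          have : p.length = 0 := by
            cases p with
            | nil => rfl
            | cons h q =>
              exact absurd q.end_mem_support ((SimpleGraph.Walk.cons_isPath_iff _ _).mp hp).2
          omega
        refine aux_barbell_block T hac (fun i => p.getVert i) p.length hlong
          (fun i hik => (p.adj_getVert_succ hik).2)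
          (fun i hi j hj hij => aux_getVert_inj hp i hi j hj hij)
          (by simpa using hx) (by simpa using hy) ?_ Finset.univ hd
          (fun i _ => Finset.mem_univ _)
        intro i hipos hik hloopi
        refine hloop (p.getVert i) (aux_getVert_mem_support p i) ?_ ?_ hloopi
        · intro hvx
          have : i = 0 := aux_getVert_inj hp i (by omega) 0 (by omega) (by simpa using hvx)
          omega
        · intro hvy
          have : i = p.length := aux_getVert_inj hp i (by omega) p.length le_rfl
            (by simpa using hvy)
          omega


/-- Lifting a fully-looped walk of `T.loopless` to the induced subgraph on looped vertices. -/
lemma aux_lift : ∀ {a b : V} (p : T.loopless.Walk a b)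
    (hall : ∀ v ∈ p.support, T.Adj v v),
    ((T.induce {v : V | T.Adj v v}).loopless).Reachable
      ⟨a, hall a p.start_mem_support⟩ ⟨b, hall b p.end_mem_support⟩ := by
  intro a b p
  induction p with
  | nil => intro _; rfl
  | @cons a c b h q ih =>
    intro hall
    have hall' : ∀ v ∈ q.support, T.Adj v v := fun v hv =>
      hall v (by simp [SimpleGraph.Walk.support_cons, hv])
    refine SimpleGraph.Reachable.trans (SimpleGraph.Adj.reachable ?_) (ih hall')
    exact ⟨fun he => h.1 (congrArg Subtype.val he), h.2⟩

end Aux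

/-- If a finite nontrivial looped tree is dismantlable, then its set of looped
vertices is nonempty and induces a connected subgraph. -/
theorem dismantlable_loopedTree_loops_connected {V : Type} [Fintype V] [DecidableEq V]
    [Nontrivial V] (T : LoopedGraph V) (htree : T.loopless.IsTree)
    (hd : T.Dismantlable) :
    {v : V | T.Adj v v}.Nonempty ∧
      ((T.induce {v : V | T.Adj v v}).loopless).Connected := by
  have hnb : ∀ w ∈ (Finset.univ : Finset V), ∃ z ∈ (Finset.univ : Finset V), T.Adj w z := by
    intro w _
    obtain ⟨y, hy⟩ := exists_ne w
    obtain ⟨q⟩ := htree.isConnected.preconnected w y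
    cases q with
    | nil => exact absurd rfl hy.symm
    | cons h q => exact ⟨_, Finset.mem_univ _, h.2⟩
  obtain ⟨v₀, hv₀⟩ := aux_exists_loop T hd hnb
  refine ⟨⟨v₀, hv₀⟩, ?_⟩
  haveI : Nonempty ↑{v : V | T.Adj v v} := ⟨⟨v₀, hv₀⟩⟩
  refine ⟨?_⟩
  rintro ⟨a, ha⟩ ⟨b, hb⟩
  obtain ⟨w⟩ := htree.isConnected.preconnected a b
  have hp := w.bypass_isPath
  have hall := aux_path_all_looped T htree.IsAcyclic hd w.bypass.length a b ha hb
    w.bypass hp le_rfl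
  exact aux_lift T w.bypass hall
end

section
/- For a finite nontrivial looped tree T, the following are equivalent: (1) T is chordal/tree decomposable; (2) T is dismantlable; (3) Loop(T) is nonempty and connected in T. -/
/-- A graph, possibly with loops: a symmetric relation on vertices. -/
structure LoopGraph (V : Type*) where
  Adj : V → V → Prop
  symm : ∀ {u v : V}, Adj u v → Adj v u

namespace LoopGraph

variable {VG VH : Type*}

/-- `G.ReachIn n x y`: there is a walk of length exactly `n` from `x` to `y`. -/
def ReachIn (G : LoopGraph VG) : ℕ → VG → VG → Prop
  | 0, x, y => x = y
  | n + 1, x, y => ∃ z, G.Adj x z ∧ G.ReachIn n z y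

/-- `dist(A, B) ≥ g`: no walk of length `< g` connects a point of `A` to a point of `B`. -/
def DistGe (G : LoopGraph VG) (A B : Set VG) (g : ℕ) : Prop :=
  ∀ x ∈ A, ∀ y ∈ B, ∀ n < g, ¬ G.ReachIn n x y

/-- A graph homomorphism from `G` to `H`. -/
def IsHom (G : LoopGraph VG) (H : LoopGraph VH) (f : VG → VH) : Prop :=
  ∀ ⦃x y : VG⦄, G.Adj x y → H.Adj (f x) (f y)

/-- `f` is a graph homomorphism on the subgraph of `G` induced by `S` (local admissibility). -/
def IsHomOn (G : LoopGraph VG) (H : LoopGraph VH) (f : VG → VH) (S : Set VG) : Prop :=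
  ∀ ⦃x⦄, x ∈ S → ∀ ⦃y⦄, y ∈ S → G.Adj x y → H.Adj (f x) (f y)

/-- The configuration `α|_A` is globally admissible: it extends to a point of `Hom(G,H)`. -/
def GlobAdm (G : LoopGraph VG) (H : LoopGraph VH) (A : Set VG) (α : VG → VH) : Prop :=
  ∃ ω : VG → VH, G.IsHom H ω ∧ ∀ x ∈ A, ω x = α x

/-- A board: countable, simple, connected, locally finite, with at least two vertices. -/
structure IsBoard (G : LoopGraph VG) : Prop where
  countable : Countable VG
  simple : ∀ v : VG, ¬ G.Adj v v
  connected : ∀ x y : VG, ∃ n : ℕ, G.ReachIn n x y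
  locallyFinite : ∀ v : VG, {w : VG | G.Adj v w}.Finite
  nontrivial : Nontrivial VG

/-- Single-site fillability of `Hom(G, H)`. -/
def SSF (G : LoopGraph VG) (H : LoopGraph VH) : Prop :=
  ∀ (x : VG) (B : Set VG), B ⊆ {y : VG | G.Adj x y} →
    ∀ β : VG → VH, G.IsHomOn H β B →
      ∃ α : VG → VH, G.IsHomOn H α (insert x B) ∧ ∀ y ∈ B, α y = β y

/-- Topological strong spatial mixing with gap `g`. -/
def TSSM (G : LoopGraph VG) (H : LoopGraph VH) (g : ℕ) : Prop :=
  ∀ (A B S : Set VG), A.Finite → B.Finite → S.Finite → G.DistGe A B g →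
    ∀ α σ β : VG → VH,
      (∃ ω, G.IsHom H ω ∧ (∀ x ∈ A, ω x = α x) ∧ (∀ x ∈ S, ω x = σ x)) →
      (∃ ω, G.IsHom H ω ∧ (∀ x ∈ S, ω x = σ x) ∧ (∀ x ∈ B, ω x = β x)) →
      ∃ ω, G.IsHom H ω ∧ (∀ x ∈ A, ω x = α x) ∧ (∀ x ∈ S, ω x = σ x) ∧
        ∀ x ∈ B, ω x = β x

/-- Strong irreducibility with gap `g`. -/
def StrongIrred (G : LoopGraph VG) (H : LoopGraph VH) (g : ℕ) : Prop :=
  ∀ (A B : Set VG), A.Finite → B.Finite → A.Nonempty → B.Nonempty → Disjoint A B →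
    G.DistGe A B g → ∀ α β : VG → VH,
      G.GlobAdm H A α → G.GlobAdm H B β →
      ∃ ω, G.IsHom H ω ∧ (∀ x ∈ A, ω x = α x) ∧ ∀ x ∈ B, ω x = β x

end LoopGraph

namespace LoopGraph

/-- The simple graph obtained from `G` by deleting all loops. -/
def loopless {V : Type*} (G : LoopGraph V) : SimpleGraph V where
  Adj u v := u ≠ v ∧ G.Adj u v
  symm := ⟨fun u v h => ⟨Ne.symm h.1, G.symm h.2⟩⟩
  loopless := ⟨fun v h => h.1 rfl⟩

/-- The subgraph of `G` induced by a set `S` of vertices. -/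
def induce {V : Type*} (G : LoopGraph V) (S : Set V) : LoopGraph S :=
  ⟨fun a b => G.Adj a.1 b.1, fun {_ _} h => G.symm h⟩

/-- A graph is loop-chordal if every vertex has a loop and its loopless version is chordal. -/
def LoopChordal {V : Type*} (G : LoopGraph V) : Prop :=
  (∀ v, G.Adj v v) ∧ G.loopless.IsChordal

end LoopGraph

namespace LoopGraph

/-- The subgraph of `G` induced on `S` can be reduced to a single vertex by folds. -/
inductive DismOn {V : Type*} [DecidableEq V] (G : LoopGraph V) : Finset V → Prop
  | single (v : V) : DismOn G {v}
  | fold (S : Finset V) (u v : V) (hu : u ∈ S) (hv : v ∈ S) (huv : u ≠ v)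
      (habsorb : ∀ w ∈ S, G.Adj u w → G.Adj v w) (hrec : DismOn G (S.erase u)) :
      DismOn G S

/-- A finite graph is dismantlable if a sequence of folds reduces it to a single vertex. -/
def Dismantlable {V : Type*} [DecidableEq V] [Fintype V] (G : LoopGraph V) : Prop :=
  DismOn G Finset.univ

end LoopGraph

namespace LoopGraph

/-- `G` has a chordal/tree decomposition `V = C ⊔ T ⊔ J`. -/
def ChordalTreeDecomposable {V : Type*} (G : LoopGraph V) : Prop :=
  ∃ C T J : Set V,
    Disjoint C T ∧ Disjoint C J ∧ Disjoint T J ∧ C ∪ T ∪ J = Set.univ ∧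
    C.Nonempty ∧ (∀ v ∈ C, G.Adj v v) ∧ ((G.induce C).loopless).IsChordal ∧
    ∃ (m n : ℕ) (Tf : Fin m → Set V) (Jf : Fin n → Set V),
      (∀ j, (Tf j).Nonempty) ∧
      (∀ j j', j ≠ j' → Disjoint (Tf j) (Tf j')) ∧
      (⋃ j, Tf j) = T ∧
      (∀ k, (Jf k).Nonempty) ∧
      (∀ k k', k ≠ k' → Disjoint (Jf k) (Jf k')) ∧
      (⋃ k, Jf k) = J ∧
      (∀ j, (∀ t ∈ Tf j, ¬ G.Adj t t) ∧ ((G.induce (Tf j)).loopless).IsTree) ∧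
      (∀ j, ∃ r ∈ Tf j, ∃ c ∈ C, G.Adj r c ∧
        ∀ t ∈ Tf j, ∀ c' ∈ C, G.Adj t c' → t = r ∧ c' = c) ∧
      (∀ k, ((G.induce (Jf k)).loopless).Connected) ∧
      (∀ k, ∃! c, c ∈ C ∧ ∀ u ∈ Jf k, G.Adj u c) ∧
      (∀ j j', j ≠ j' → ∀ t ∈ Tf j, ∀ t' ∈ Tf j', ¬ G.Adj t t') ∧
      (∀ k k', k ≠ k' → ∀ u ∈ Jf k, ∀ u' ∈ Jf k', ¬ G.Adj u u') ∧
      (∀ t ∈ T, ∀ u ∈ J, ¬ G.Adj t u)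

end LoopGraph

set_option linter.unusedSectionVars false
set_option linter.unusedVariables false
set_option maxHeartbeats 1000000

namespace LTaux
open SimpleGraph
variable {V : Type} [DecidableEq V] {G : SimpleGraph V}

noncomputable def tpath (hT : G.IsTree) (x y : V) : G.Walk x y :=
  (hT.existsUnique_path x y).choose

lemma tpath_isPath (hT : G.IsTree) (x y : V) : (tpath hT x y).IsPath :=
  (hT.existsUnique_path x y).choose_spec.1

lemma tpath_eq (hT : G.IsTree) {x y : V} (p : G.Walk x y) (hp : p.IsPath) :
    p = tpath hT x y :=
  (hT.existsUnique_path x y).choose_spec.2 p hp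

lemma no_triangle (hT : G.IsTree) {a b c : V} (h1 : G.Adj a b) (h2 : G.Adj b c)
    (h3 : G.Adj a c) : False := by
  have hp1 : (Walk.cons h1 (Walk.cons h2 Walk.nil)).IsPath := by
    simp [Walk.isPath_def, h1.ne, h2.ne, h3.ne]
  have hp2 : (Walk.cons h3 Walk.nil).IsPath := by simp [h3.ne]
  have := (tpath_eq hT _ hp1).trans (tpath_eq hT _ hp2).symm
  have := congrArg Walk.length this
  simp at this

lemma path_loop_eq_nil {x : V} (p : G.Walk x x) (hp : p.IsPath) : p = Walk.nil := by
  have := SimpleGraph.Path.loop_eq (⟨p, hp⟩ : G.Path x x)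
  simpa [SimpleGraph.Path.nil] using congrArg Subtype.val this

lemma adj_start_snd (hT : G.IsTree) {x y w : V} (p : G.Walk x y) (hp : p.IsPath)
    (hw : w ∈ p.support) (ha : G.Adj x w) : p.support.tail.head? = some w := by
  have hpe : (Walk.cons ha Walk.nil).IsPath := by simp [ha.ne]
  have ht : (p.takeUntil w hw).IsPath := hp.takeUntil hw
  have heq : p.takeUntil w hw = Walk.cons ha Walk.nil :=
    (tpath_eq hT _ ht).trans (tpath_eq hT _ hpe).symm
  have hspec := p.take_spec hw
  rw [heq] at hspec
  rw [Walk.cons_append, Walk.nil_append] at hspec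
  rw [← hspec, Walk.support_cons]
  rw [Walk.support_eq_cons (p.dropUntil w hw)]
  rfl

lemma adj_start_eq (hT : G.IsTree) {x y w₁ w₂ : V} (p : G.Walk x y) (hp : p.IsPath)
    (h1 : w₁ ∈ p.support) (h2 : w₂ ∈ p.support)
    (a1 : G.Adj x w₁) (a2 : G.Adj x w₂) : w₁ = w₂ := by
  have := (adj_start_snd hT p hp h1 a1).symm.trans (adj_start_snd hT p hp h2 a2)
  exact Option.some.inj this

lemma walk_cons_of_ne {u x : V} (W : G.Walk u x) (h : u ≠ x) :
    ∃ (w : V) (ha : G.Adj u w) (d : G.Walk w x), W = Walk.cons ha d := by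
  cases W with
  | nil => exact absurd rfl h
  | cons ha d => exact ⟨_, ha, d, rfl⟩

lemma interior_neighbors {x y u : V} (p : G.Walk x y) (hp : p.IsPath)
    (hu : u ∈ p.support) (hux : u ≠ x) (huy : u ≠ y) :
    ∃ w₁ w₂, w₁ ∈ p.support ∧ w₂ ∈ p.support ∧ w₁ ≠ w₂ ∧ G.Adj u w₁ ∧ G.Adj u w₂ := by
  obtain ⟨w₁, ha1, d1, he1⟩ := walk_cons_of_ne ((p.takeUntil u hu).reverse) hux
  obtain ⟨w₂, ha2, d2, he2⟩ := walk_cons_of_ne (p.dropUntil u hu) huy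
  have hw1t : w₁ ∈ (p.takeUntil u hu).support := by
    have : w₁ ∈ (p.takeUntil u hu).reverse.support := by
      rw [he1, Walk.support_cons]; exact List.mem_cons_of_mem _ d1.start_mem_support
    rwa [Walk.support_reverse, List.mem_reverse] at this
  have hw2t : w₂ ∈ (p.dropUntil u hu).support.tail := by
    rw [he2, Walk.support_cons]; exact d2.start_mem_support
  have hsupp : p.support = (p.takeUntil u hu).support ++ (p.dropUntil u hu).support.tail := by
    conv_lhs => rw [← p.take_spec hu]
    exact Walk.support_append _ _
  have hnd : p.support.Nodup := hp.support_nodup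
  rw [hsupp] at hnd
  refine ⟨w₁, w₂, ?_, ?_, ?_, ha1, ha2⟩
  · exact p.support_takeUntil_subset hu hw1t
  · rw [hsupp]; exact List.mem_append_right _ hw2t
  · intro h
    exact (List.disjoint_of_nodup_append hnd) hw1t (h ▸ hw2t)

end LTaux

namespace LTaux
open SimpleGraph
variable {V : Type} [DecidableEq V] {T : LoopGraph V}

/-- set of looped vertices -/
def Lset (T : LoopGraph V) : Set V := {v | T.Adj v v}

/-- a finset is path-closed -/
def PCF (T : LoopGraph V) (S : Finset V) : Prop :=
  ∀ ⦃x⦄, x ∈ S → ∀ ⦃y⦄, y ∈ S → ∀ p : T.loopless.Walk x y, p.IsPath →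
    ∀ z ∈ p.support, z ∈ S

/-- the loop set is path-closed -/
def PCL (T : LoopGraph V) : Prop :=
  ∀ ⦃x⦄, T.Adj x x → ∀ ⦃y⦄, T.Adj y y → ∀ p : T.loopless.Walk x y, p.IsPath →
    ∀ z ∈ p.support, T.Adj z z

lemma loopless_adj {x y : V} (h : x ≠ y) (h2 : T.Adj x y) : T.loopless.Adj x y := ⟨h, h2⟩

lemma PCF_erase_unique (hpc : PCF T S) (u : V)
    (huniq : ∀ w₁ w₂, w₁ ∈ S → w₂ ∈ S → T.loopless.Adj u w₁ → T.loopless.Adj u w₂ → w₁ = w₂) :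
    PCF T (S.erase u) := by
  intro x hx y hy p hp z hz
  have hxS := Finset.mem_of_mem_erase hx
  have hyS := Finset.mem_of_mem_erase hy
  have hzS := hpc hxS hyS p hp z hz
  rw [Finset.mem_erase]
  refine ⟨?_, hzS⟩
  rintro rfl
  obtain ⟨w₁, w₂, m1, m2, hne, a1, a2⟩ := interior_neighbors p hp hz
    (Ne.symm (Finset.ne_of_mem_erase hx)) (Ne.symm (Finset.ne_of_mem_erase hy))
  exact hne (huniq w₁ w₂ (hpc hxS hyS p hp _ m1) (hpc hxS hyS p hp _ m2) a1 a2)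

lemma PCF_erase_fold (hT : T.loopless.IsTree) {S : Finset V} (hpc : PCF T S) {u v : V}
    (hv : v ∈ S) (huv : u ≠ v)
    (habsorb : ∀ w ∈ S, T.Adj u w → T.Adj v w) : PCF T (S.erase u) := by
  intro x hx y hy p hp z hz
  have hxS := Finset.mem_of_mem_erase hx
  have hyS := Finset.mem_of_mem_erase hy
  have hzS := hpc hxS hyS p hp z hz
  rw [Finset.mem_erase]
  refine ⟨?_, hzS⟩
  rintro rfl
  obtain ⟨w₁, w₂, m1, m2, hne, a1, a2⟩ := interior_neighbors p hp hz
    (Ne.symm (Finset.ne_of_mem_erase hx)) (Ne.symm (Finset.ne_of_mem_erase hy))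
  have hw1S : w₁ ∈ S := hpc hxS hyS p hp _ m1
  have hw2S : w₂ ∈ S := hpc hxS hyS p hp _ m2
  have hv1 : T.Adj v w₁ := habsorb w₁ hw1S a1.2
  have hv2 : T.Adj v w₂ := habsorb w₂ hw2S a2.2
  by_cases he1 : v = w₁
  · by_cases he2 : v = w₂
    · exact hne (he1.symm.trans he2)
    · exact no_triangle hT a1.symm a2 (he1 ▸ loopless_adj he2 hv2)
  · by_cases he2 : v = w₂
    · exact no_triangle hT a2.symm a1 (he2 ▸ loopless_adj he1 hv1)
    · -- two distinct paths w₁ → w₂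
      have hp1 : (Walk.cons a1.symm (Walk.cons a2 Walk.nil)).IsPath := by
        simp [Walk.isPath_def, a1.ne', a2.ne, hne]
      have hp2 : (Walk.cons (loopless_adj (Ne.symm he1) (T.symm hv1)) (Walk.cons
          (loopless_adj he2 hv2) Walk.nil)).IsPath := by
        simp [Walk.isPath_def, Ne.symm he1, he2, hne]
      have := (tpath_eq hT _ hp1).trans (tpath_eq hT _ hp2).symm
      have hs := congrArg Walk.support this
      simp [Walk.support_cons] at hs
      exact huv hs

lemma reach_induce {S : Set V} {x y : V} (p : T.loopless.Walk x y) :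
    ∀ (hx : x ∈ S) (hy : y ∈ S), (∀ z ∈ p.support, z ∈ S) →
      ((T.induce S).loopless).Reachable ⟨x, hx⟩ ⟨y, hy⟩ := by
  induction p with
  | nil => intro hx hy _; rfl
  | @cons a b c h q ih =>
    intro hx hy hsup
    have hb : b ∈ S := hsup b (by simp)
    have hadj : ((T.induce S).loopless).Adj ⟨a, hx⟩ ⟨b, hb⟩ :=
      ⟨fun he => h.1 (congrArg Subtype.val he), h.2⟩
    exact hadj.reachable.trans (ih hb hy (fun z hz => hsup z (by simp [hz])))

lemma walk_of_induce {S : Set V} {a b : ↥S} (p : ((T.induce S).loopless).Walk a b) :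
    ∃ q : T.loopless.Walk a.val b.val, ∀ z ∈ q.support,
      ∃ z' : ↥S, z'.val = z ∧ ((T.induce S).loopless).Reachable a z' := by
  induction p with
  | nil => exact ⟨Walk.nil, by intro z hz; simp at hz; exact ⟨_, hz.symm, Reachable.refl _⟩⟩
  | @cons a c b h q ih =>
    obtain ⟨q', hq'⟩ := ih
    refine ⟨Walk.cons ⟨fun he => h.1 (Subtype.ext he), h.2⟩ q', ?_⟩
    intro z hz
    change z ∈ (a : V) :: q'.support at hz
    rcases List.mem_cons.mp hz with hz | hz
    · exact ⟨a, hz.symm, Reachable.refl a⟩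
    · obtain ⟨z', hz1, hz2⟩ := hq' z hz
      exact ⟨z', hz1, h.reachable.trans hz2⟩

lemma exit_edge {A : Set V} {w y : V} (q : T.loopless.Walk w y) :
    w ∈ A → y ∉ A → ∃ t ∈ A, ∃ s, s ∉ A ∧ T.loopless.Adj t s ∧ s ∈ q.support.tail := by
  induction q with
  | nil => intro hw hy; exact absurd hw hy
  | @cons a c b h q' ih =>
    intro hw hy
    by_cases hc : c ∈ A
    · obtain ⟨t, ht, s, hs, hadj, hmem⟩ := ih hc hy
      refine ⟨t, ht, s, hs, hadj, ?_⟩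
      rw [Walk.support_cons]
      exact List.mem_of_mem_tail hmem
    · exact ⟨a, hw, c, hc, h, by rw [Walk.support_cons]; exact q'.start_mem_support⟩

lemma avoid {A : Set V} {r c : V}
    (hb : ∀ t ∈ A, ∀ s, s ∉ A → T.loopless.Adj t s → t = r ∧ s = c)
    {x y : V} (p : T.loopless.Walk x y) :
    p.IsPath → x ∉ A → y ∉ A → ∀ z ∈ p.support, z ∉ A := by
  induction p with
  | nil => intro _ hx _ z hz; simp at hz; subst hz; exact hx
  | @cons a w b h q ih =>
    intro hp hx hy z hz
    by_cases hw : w ∈ A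
    · exfalso
      obtain ⟨hwr, hxc⟩ := hb w hw a hx h.symm
      obtain ⟨t, ht, s, hs, hadj, hmem⟩ := exit_edge q hw hy
      obtain ⟨-, hsc⟩ := hb t ht s hs hadj
      have : s = a := hsc.trans hxc.symm
      subst this
      have hmem' : s ∈ q.support := List.mem_of_mem_tail hmem
      exact ((Walk.cons_isPath_iff h q).mp hp).2 hmem'
    · rw [Walk.support_cons] at hz
      rcases List.mem_cons.mp hz with hz | hz
      · subst hz; exact hx
      · exact ih hp.of_cons hw hy z hz

lemma acyclic_induce (hT : T.loopless.IsTree) {S : Set V} :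
    ((T.induce S).loopless).IsAcyclic := by
  intro v c hc
  let f : (T.induce S).loopless →g T.loopless :=
    ⟨Subtype.val, fun {a b} h => ⟨fun he => h.1 (Subtype.ext he), h.2⟩⟩
  exact hT.IsAcyclic (c.map f) (hc.map Subtype.val_injective)

lemma chordal_induce (hT : T.loopless.IsTree) {S : Set V} :
    ((T.induce S).loopless).IsChordal :=
  fun _ c hc _ => absurd hc (acyclic_induce hT c)

lemma connected_of_pcl (hT : T.loopless.IsTree) (hpcl : PCL T) (hne : (Lset T).Nonempty) :
    ((T.induce (Lset T)).loopless).Connected := by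
  rw [connected_iff]
  refine ⟨?_, ⟨⟨hne.choose, hne.choose_spec⟩⟩⟩
  rintro ⟨x, hx⟩ ⟨y, hy⟩
  exact reach_induce (tpath hT x y) hx hy
    (fun z hz => hpcl hx hy (tpath hT x y) (tpath_isPath hT x y) z hz)

lemma pcl_of_connected (hT : T.loopless.IsTree)
    (hconn : ((T.induce (Lset T)).loopless).Connected) : PCL T := by
  intro x hx y hy p hp z hz
  obtain ⟨w⟩ := hconn.preconnected ⟨x, hx⟩ ⟨y, hy⟩
  obtain ⟨q, hq⟩ := walk_of_induce w
  have hsub : ∀ z ∈ q.support, z ∈ Lset T := by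
    intro z hz
    obtain ⟨z', hz1, _⟩ := hq z hz
    exact hz1 ▸ z'.2
  have hbp : q.bypass = tpath hT x y := tpath_eq hT _ q.bypass_isPath
  have hp' : p = tpath hT x y := tpath_eq hT p hp
  have : z ∈ q.bypass.support := by rw [hbp, ← hp']; exact hz
  exact hsub z (q.support_bypass_subset this)

lemma first_exit {x y : V} (p : T.loopless.Walk x y) :
    x ∉ Lset T → y ∈ Lset T →
    ∃ r cc, T.loopless.Adj r cc ∧ r ∉ Lset T ∧ cc ∈ Lset T ∧
      ∃ w : T.loopless.Walk x r, ∀ z ∈ w.support, z ∉ Lset T := by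
  induction p with
  | nil => intro hx hy; exact absurd hy hx
  | @cons a c b h q ih =>
    intro hx hy
    by_cases hc : c ∈ Lset T
    · exact ⟨a, c, h, hx, hc, Walk.nil, by intro z hz; simp at hz; subst hz; exact hx⟩
    · obtain ⟨r, cc, hadj, hr, hcc, w, hw⟩ := ih hc hy
      refine ⟨r, cc, hadj, hr, hcc, Walk.cons h w, ?_⟩
      intro z hz
      rw [Walk.support_cons] at hz
      rcases List.mem_cons.mp hz with hz | hz
      · subst hz; exact hx
      · exact hw z hz

lemma attach_exists (hT : T.loopless.IsTree) {x a : V} (hx : x ∉ Lset T) (ha : a ∈ Lset T) :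
    ∃ r cc, T.loopless.Adj r cc ∧ r ∉ Lset T ∧ cc ∈ Lset T ∧
      ∃ w : T.loopless.Walk x r, ∀ z ∈ w.support, z ∉ Lset T :=
  first_exit (tpath hT x a) hx ha

lemma attach_unique (hT : T.loopless.IsTree) (hpcl : PCL T) {t r c c' : V}
    (ht : t ∉ Lset T) (hc : c ∈ Lset T) (hc' : c' ∈ Lset T)
    (hadj1 : T.loopless.Adj t c') (hadj2 : T.loopless.Adj r c)
    (p : T.loopless.Walk t r) (hps : ∀ z ∈ p.support, z ∉ Lset T) :
    t = r ∧ c' = c := by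
  have hp' : p.bypass.IsPath := p.bypass_isPath
  have hps' : ∀ z ∈ p.bypass.support, z ∉ Lset T :=
    fun z hz => hps z (p.support_bypass_subset hz)
  have hW1 : (Walk.cons hadj1.symm p.bypass).IsPath :=
    hp'.cons (fun hmem => hps' c' hmem hc')
  set q := tpath hT c' c with hqdef
  have hq : q.IsPath := tpath_isPath hT c' c
  have hqL : ∀ z ∈ q.support, z ∈ Lset T := fun z hz => hpcl hc' hc q hq z hz
  have hrL : r ∉ Lset T := hps r p.end_mem_support
  have hW2i : (Walk.cons hadj2 q.reverse).IsPath := by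
    refine (hq.reverse).cons ?_
    rw [Walk.support_reverse, List.mem_reverse]
    exact fun hmem => hrL (hqL r hmem)
  have hW2 : ((Walk.cons hadj2 q.reverse).reverse).IsPath := hW2i.reverse
  have heq : Walk.cons hadj1.symm p.bypass = (Walk.cons hadj2 q.reverse).reverse :=
    (tpath_eq hT _ hW1).trans (tpath_eq hT _ hW2).symm
  have hsupp := congrArg Walk.support heq
  rw [Walk.support_cons, Walk.support_reverse, Walk.support_cons,
    Walk.support_reverse] at hsupp
  simp only [List.reverse_cons, List.reverse_reverse] at hsupp
  -- hsupp : c' :: p.bypass.support = q.support ++ [r]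
  rw [Walk.support_eq_cons q] at hsupp
  rw [List.cons_append] at hsupp
  have hsupp2 : p.bypass.support = q.support.tail ++ [r] := (List.cons.injEq _ _ _ _ ▸ hsupp).2
  rw [Walk.support_eq_cons p.bypass] at hsupp2
  cases hqt : q.support.tail with
  | nil =>
    rw [hqt] at hsupp2
    simp at hsupp2
    refine ⟨by
      have h := Walk.support_eq_cons p.bypass
      rw [hsupp2] at h
      exact (List.cons.inj h).1.symm, ?_⟩
    have : c ∈ q.support := q.end_mem_support
    rw [Walk.support_eq_cons q, hqt] at this
    simp at this
    exact this.symm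
  | cons s rest =>
    exfalso
    rw [hqt] at hsupp2
    have hts : t = s := by
      have := (List.cons.injEq _ _ _ _ ▸ hsupp2).1
      exact this
    have hsL : s ∈ Lset T := by
      refine hqL s ?_
      rw [Walk.support_eq_cons q, hqt]
      simp
    exact ht (hts ▸ hsL)

lemma dism_of_core (hT : T.loopless.IsTree) (hpcl : PCL T) :
    ∀ n (S : Finset V), S.card ≤ n → (∃ a ∈ S, T.Adj a a) → PCF T S → T.DismOn S := by
  intro n
  induction n with
  | zero =>
    intro S hc ha _
    obtain ⟨a, haS, _⟩ := ha
    rw [Nat.le_zero, Finset.card_eq_zero] at hc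
    subst hc; simp at haS
  | succ n IH =>
    intro S hcard hex hpc
    classical
    obtain ⟨a, haS, haL⟩ := hex
    by_cases hall : ∀ s ∈ S, T.Adj s s
    · by_cases hsing : S.card ≤ 1
      · have hS : S = {a} := Finset.eq_singleton_iff_unique_mem.mpr
          ⟨haS, fun b hb => Finset.card_le_one.mp hsing b hb a haS⟩
        rw [hS]; exact LoopGraph.DismOn.single a
      · push_neg at hsing
        obtain ⟨u, huS, hmax⟩ := S.exists_max_image (fun y => (tpath hT a y).length) ⟨a, haS⟩
        obtain ⟨b, hbS, hba⟩ := Finset.exists_mem_ne hsing a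
        have hlenb : 1 ≤ (tpath hT a b).length := by
          rcases Nat.eq_zero_or_pos (tpath hT a b).length with h0 | h1
          · exact absurd (Walk.eq_of_length_eq_zero h0) (Ne.symm hba)
          · exact h1
        have hlenu : 1 ≤ (tpath hT a u).length := le_trans hlenb (hmax b hbS)
        have hua : u ≠ a := by
          rintro rfl
          rw [path_loop_eq_nil _ (tpath_isPath hT u u)] at hlenu
          simp at hlenu
        set p := tpath hT a u with hpdef
        have hp : p.IsPath := tpath_isPath hT a u
        have hsubS : ∀ z ∈ p.support, z ∈ S := fun z hz => hpc haS huS p hp z hz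
        obtain ⟨v, hav, d, he⟩ := walk_cons_of_ne p.reverse hua
        have hvmem : v ∈ p.support := by
          have : v ∈ p.reverse.support := by
            rw [he, Walk.support_cons]; exact List.mem_cons_of_mem _ d.start_mem_support
          rwa [Walk.support_reverse, List.mem_reverse] at this
        have hvS : v ∈ S := hsubS v hvmem
        have hinpath : ∀ w ∈ S, T.loopless.Adj u w → w ∈ p.support := by
          intro w hwS hadj
          by_contra hwp
          have hqp : ((Walk.cons hadj.symm p.reverse).reverse).IsPath := by
            refine ((hp.reverse).cons ?_).reverse
            rw [Walk.support_reverse, List.mem_reverse]; exact hwp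
          have hlen := congrArg Walk.length (tpath_eq hT _ hqp)
          rw [Walk.length_reverse, Walk.length_cons, Walk.length_reverse] at hlen
          have := hmax w hwS
          omega
        have huniq : ∀ w ∈ S, T.loopless.Adj u w → w = v := by
          intro w hwS hadj
          refine adj_start_eq hT p.reverse hp.reverse ?_ ?_ hadj hav
          · rw [Walk.support_reverse, List.mem_reverse]; exact hinpath w hwS hadj
          · rw [he, Walk.support_cons]; exact List.mem_cons_of_mem _ d.start_mem_support
        refine LoopGraph.DismOn.fold S u v huS hvS hav.ne ?_ ?_
        · intro w hwS hTadj
          by_cases hwu : w = u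
          · rw [hwu]; exact T.symm hav.2
          · rw [huniq w hwS ⟨fun h => hwu h.symm, hTadj⟩]; exact hall v hvS
        · refine IH _ ?_ ⟨v, Finset.mem_erase.mpr ⟨hav.ne', hvS⟩, hall v hvS⟩
            (PCF_erase_unique hpc u
              (fun w₁ w₂ h1 h2 a1 a2 => (huniq w₁ h1 a1).trans (huniq w₂ h2 a2).symm))
          rw [Finset.card_erase_of_mem huS]; omega
    · push_neg at hall
      obtain ⟨s, hsS, hsL⟩ := hall
      obtain ⟨u, huF, hmax⟩ := (S.filter (fun x => ¬ T.Adj x x)).exists_max_image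
          (fun y => (tpath hT a y).length) ⟨s, Finset.mem_filter.mpr ⟨hsS, hsL⟩⟩
      have huS : u ∈ S := (Finset.mem_filter.mp huF).1
      have huL : ¬ T.Adj u u := by
        have := (Finset.mem_filter.mp huF).2
        simpa using this
      have hua : u ≠ a := fun h => huL (h ▸ haL)
      set p := tpath hT a u with hpdef
      have hp : p.IsPath := tpath_isPath hT a u
      have hsubS : ∀ z ∈ p.support, z ∈ S := fun z hz => hpc haS huS p hp z hz
      obtain ⟨v, hav, d, he⟩ := walk_cons_of_ne p.reverse hua
      have hvmem : v ∈ p.support := by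
        have : v ∈ p.reverse.support := by
          rw [he, Walk.support_cons]; exact List.mem_cons_of_mem _ d.start_mem_support
        rwa [Walk.support_reverse, List.mem_reverse] at this
      have hvS : v ∈ S := hsubS v hvmem
      have hinpath : ∀ w ∈ S, T.loopless.Adj u w → w ∈ p.support := by
        intro w hwS hadj
        by_contra hwp
        have hqp : ((Walk.cons hadj.symm p.reverse).reverse).IsPath := by
          refine ((hp.reverse).cons ?_).reverse
          rw [Walk.support_reverse, List.mem_reverse]; exact hwp
        have hqe := tpath_eq hT _ hqp
        by_cases hwL : T.Adj w w
        · have hmem : u ∈ (tpath hT a w).support := by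
            rw [← hqe, Walk.support_reverse, List.mem_reverse, Walk.support_cons]
            refine List.mem_cons_of_mem _ ?_
            exact p.reverse.start_mem_support
          exact huL (hpcl haL hwL (tpath hT a w) (tpath_isPath hT a w) u hmem)
        · have hwF : w ∈ S.filter (fun x => ¬ T.Adj x x) := Finset.mem_filter.mpr ⟨hwS, hwL⟩
          have hle := hmax w hwF
          have hlen := congrArg Walk.length hqe
          rw [Walk.length_reverse, Walk.length_cons, Walk.length_reverse] at hlen
          omega
      have huniq : ∀ w ∈ S, T.loopless.Adj u w → w = v := by
        intro w hwS hadj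
        refine adj_start_eq hT p.reverse hp.reverse ?_ ?_ hadj hav
        · rw [Walk.support_reverse, List.mem_reverse]; exact hinpath w hwS hadj
        · rw [he, Walk.support_cons]; exact List.mem_cons_of_mem _ d.start_mem_support
      have hrec : T.DismOn (S.erase u) → T.DismOn S → T.DismOn S := fun _ h => h
      have hIH : T.DismOn (S.erase u) := by
        refine IH _ ?_ ⟨a, Finset.mem_erase.mpr ⟨Ne.symm hua, haS⟩, haL⟩
          (PCF_erase_unique hpc u
            (fun w₁ w₂ h1 h2 a1 a2 => (huniq w₁ h1 a1).trans (huniq w₂ h2 a2).symm))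
        rw [Finset.card_erase_of_mem huS]; omega
      by_cases hvL : T.Adj v v
      · refine LoopGraph.DismOn.fold S u v huS hvS hav.ne ?_ hIH
        intro w hwS hTadj
        by_cases hwu : w = u
        · exact absurd (hwu ▸ hTadj) huL
        · rw [huniq w hwS ⟨fun h => hwu h.symm, hTadj⟩]; exact hvL
      · have hva : v ≠ a := fun h => hvL (h ▸ haL)
        have hd : d.IsPath := by
          have h2 := hp.reverse
          rw [he] at h2
          exact h2.of_cons
        obtain ⟨v2, hv2adj, d2, he2⟩ := walk_cons_of_ne d hva
        have hv2mem : v2 ∈ d.support := by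
          rw [he2, Walk.support_cons]; exact List.mem_cons_of_mem _ d2.start_mem_support
        have hv2S : v2 ∈ S := by
          have h3 : v2 ∈ p.reverse.support := by
            rw [he, Walk.support_cons]; exact List.mem_cons_of_mem _ hv2mem
          rw [Walk.support_reverse, List.mem_reverse] at h3
          exact hsubS v2 h3
        have hv2u : v2 ≠ u := by
          have hnd := hp.reverse.support_nodup
          rw [he, Walk.support_cons] at hnd
          intro hh
          subst hh
          exact (List.nodup_cons.mp hnd).1 hv2mem
        refine LoopGraph.DismOn.fold S u v2 huS hv2S (Ne.symm hv2u) ?_ hIH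
        intro w hwS hTadj
        by_cases hwu : w = u
        · exact absurd (hwu ▸ hTadj) huL
        · rw [huniq w hwS ⟨fun h => hwu h.symm, hTadj⟩]
          exact T.symm hv2adj.2

lemma loops_of_dism (hT : T.loopless.IsTree) :
    ∀ S : Finset V, T.DismOn S → PCF T S → 2 ≤ S.card →
    (∃ a ∈ S, T.Adj a a) ∧ (∀ ⦃x⦄, T.Adj x x → x ∈ S → ∀ ⦃y⦄, T.Adj y y → y ∈ S →
      ∀ p : T.loopless.Walk x y, p.IsPath → ∀ z ∈ p.support, T.Adj z z ∧ z ∈ S) := by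
  intro S hdism
  induction hdism with
  | single v => intro _ hc; simp at hc
  | fold S u v hu hv huv habsorb hrec IH =>
    intro hpc hcard
    have hpc' : PCF T (S.erase u) := PCF_erase_fold hT hpc hv huv habsorb
    by_cases h2 : 2 ≤ (S.erase u).card
    · obtain ⟨⟨a, haS', haL⟩, hclose⟩ := IH hpc' h2
      have keyU : ∀ x', u = x' → T.Adj x' x' → ∀ y, T.Adj y y → y ∈ S → y ≠ u →
          ∀ (p : T.loopless.Walk x' y), p.IsPath → ∀ z ∈ p.support, T.Adj z z ∧ z ∈ S := by
        intro x' hx' huL y hyL hyS hyu p hp z hz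
        subst hx'
        have hvu : T.Adj v u := habsorb u hu huL
        have hvL : T.Adj v v := habsorb v hv (T.symm hvu)
        have hvS' : v ∈ S.erase u := Finset.mem_erase.mpr ⟨Ne.symm huv, hv⟩
        obtain ⟨w₀, ha0, q, he⟩ := walk_cons_of_ne p (Ne.symm hyu)
        have huu : u ∈ S := hu
        have hq : q.IsPath := by
          have hp2 := hp; rw [he] at hp2; exact hp2.of_cons
        have hw0S : w₀ ∈ S := by
          refine hpc hu hyS p hp w₀ ?_
          rw [he, Walk.support_cons]; exact List.mem_cons_of_mem _ q.start_mem_support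
        have hw0v : w₀ = v := by
          by_contra hne
          exact no_triangle hT (loopless_adj huv (T.symm hvu))
            (loopless_adj (fun hh => hne hh.symm) (habsorb w₀ hw0S ha0.2)) ha0
        subst hw0v
        rw [he, Walk.support_cons] at hz
        rcases List.mem_cons.mp hz with hz | hz
        · subst hz; exact ⟨huL, hu⟩
        · have hres := hclose hvL hvS' hyL (Finset.mem_erase.mpr ⟨hyu, hyS⟩) q hq z hz
          exact ⟨hres.1, Finset.mem_of_mem_erase hres.2⟩
      refine ⟨⟨a, Finset.mem_of_mem_erase haS', haL⟩, ?_⟩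
      intro x hxL hxS y hyL hyS p hp z hz
      by_cases hxy : x = y
      · subst hxy
        rw [path_loop_eq_nil p hp] at hz
        simp at hz; subst hz
        exact ⟨hxL, hxS⟩
      · by_cases hxu : x = u
        · exact keyU x hxu.symm hxL y hyL hyS
            (fun h => hxy (hxu.trans h.symm)) p hp z hz
        · by_cases hyu : y = u
          · refine keyU y hyu.symm hyL x hxL hxS hxu p.reverse hp.reverse z ?_
            rwa [Walk.support_reverse, List.mem_reverse]
          · have hres := hclose hxL (Finset.mem_erase.mpr ⟨hxu, hxS⟩) hyL
              (Finset.mem_erase.mpr ⟨hyu, hyS⟩) p hp z hz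
            exact ⟨hres.1, Finset.mem_of_mem_erase hres.2⟩
    · have hce : (S.erase u).card = 1 := by
        have h3 := Finset.card_erase_of_mem hu
        omega
      obtain ⟨b, hb⟩ := Finset.card_eq_one.mp hce
      have hvb : v = b := by
        have h4 : v ∈ S.erase u := Finset.mem_erase.mpr ⟨Ne.symm huv, hv⟩
        rw [hb] at h4; simpa using h4
      subst hvb
      have hSmem : ∀ x ∈ S, x = u ∨ x = v := by
        intro x hx
        by_cases hxu : x = u
        · exact Or.inl hxu
        · right
          have h5 : x ∈ S.erase u := Finset.mem_erase.mpr ⟨hxu, hx⟩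
          rw [hb] at h5; simpa using h5
      have hadjuv : T.loopless.Adj u v := by
        obtain ⟨w, haw, d, hed⟩ := walk_cons_of_ne (tpath hT u v) huv
        have hwS : w ∈ S := by
          refine hpc hu hv (tpath hT u v) (tpath_isPath hT u v) w ?_
          rw [hed, Walk.support_cons]; exact List.mem_cons_of_mem _ d.start_mem_support
        rcases hSmem w hwS with h | h
        · exact absurd h.symm haw.ne
        · exact h ▸ haw
      have hvL : T.Adj v v := habsorb v hv hadjuv.2
      refine ⟨⟨v, hv, hvL⟩, ?_⟩
      intro x hxL hxS y hyL hyS p hp z hz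
      by_cases hxy : x = y
      · subst hxy
        rw [path_loop_eq_nil p hp] at hz
        simp at hz; subst hz
        exact ⟨hxL, hxS⟩
      · have hadjxy : T.loopless.Adj x y := by
          rcases hSmem x hxS with h1 | h1 <;> rcases hSmem y hyS with h2 | h2
          · exact absurd (h1.trans h2.symm) hxy
          · rw [h1, h2]; exact hadjuv
          · rw [h1, h2]; exact hadjuv.symm
          · exact absurd (h1.trans h2.symm) hxy
        have hpe : (Walk.cons hadjxy Walk.nil).IsPath := by simp [hadjxy.ne]
        have heq : p = Walk.cons hadjxy Walk.nil :=
          (tpath_eq hT p hp).trans (tpath_eq hT _ hpe).symm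
        rw [heq] at hz
        simp [Walk.support_cons] at hz
        rcases hz with hz | hz <;> subst hz
        · exact ⟨hxL, hxS⟩
        · exact ⟨hyL, hyS⟩

lemma dism_of_pcl [Fintype V] (hT : T.loopless.IsTree) (hL : (Lset T).Nonempty)
    (hpcl : PCL T) : T.Dismantlable := by
  obtain ⟨a, ha⟩ := hL
  exact dism_of_core hT hpcl Finset.univ.card Finset.univ le_rfl ⟨a, Finset.mem_univ a, ha⟩
    (fun x _ y _ p hp z hz => Finset.mem_univ z)

lemma pcl_of_dism [Fintype V] [Nontrivial V] (hT : T.loopless.IsTree) (hd : T.Dismantlable) :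
    (Lset T).Nonempty ∧ PCL T := by
  have h := loops_of_dism hT Finset.univ hd (fun x _ y _ p hp z hz => Finset.mem_univ z)
    (by rw [Finset.card_univ]; exact Fintype.one_lt_card)
  refine ⟨⟨h.1.choose, h.1.choose_spec.2⟩, ?_⟩
  intro x hx y hy p hp z hz
  exact (h.2 hx (Finset.mem_univ x) hy (Finset.mem_univ y) p hp z hz).1

lemma pcl_of_decomp (hT : T.loopless.IsTree) (hdec : T.ChordalTreeDecomposable) :
    (Lset T).Nonempty ∧ PCL T := by
  obtain ⟨C, TT, J, hCT, hCJ, hTJ, huniv, hCne, hCloop, _hchord, m, n, Tf, Jf, hTne, _hTdisj,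
    hTun, hJne, hJdisj, hJun, hTtree, hTroot, hJconn, hJcstar, hTT, hJJ, hTJedge⟩ := hdec
  have hmemU : ∀ z : V, z ∈ C ∨ z ∈ TT ∨ z ∈ J := by
    intro z
    have : z ∈ C ∪ TT ∪ J := huniv ▸ Set.mem_univ z
    rcases this with (h | h) | h
    · exact Or.inl h
    · exact Or.inr (Or.inl h)
    · exact Or.inr (Or.inr h)
  -- J parts are singletons
  have hJsing : ∀ k, Jf k = {Exists.choose (hJne k)} := by
    intro k
    obtain ⟨c₀, ⟨hc₀C, hc₀adj⟩, _⟩ := hJcstar k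
    set u := Exists.choose (hJne k) with hudef
    have hu : u ∈ Jf k := Exists.choose_spec (hJne k)
    refine Set.eq_singleton_iff_unique_mem.mpr ⟨hu, ?_⟩
    intro b hb
    by_contra hne
    have hbu : (⟨b, hb⟩ : ↥(Jf k)) ≠ ⟨u, hu⟩ := fun h => hne (congrArg Subtype.val h)
    obtain ⟨w⟩ := (hJconn k).preconnected ⟨b, hb⟩ ⟨u, hu⟩
    obtain ⟨w₀, hadj, d, he⟩ := walk_cons_of_ne w hbu
    have hbJ : b ∈ J := hJun ▸ Set.mem_iUnion.mpr ⟨k, hb⟩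
    have hw0J : (w₀ : V) ∈ J := hJun ▸ Set.mem_iUnion.mpr ⟨k, w₀.2⟩
    have hbc : T.loopless.Adj b c₀ :=
      ⟨fun h => (Set.disjoint_left.mp hCJ) (h ▸ hc₀C) hbJ, hc₀adj b hb⟩
    have hwc : T.loopless.Adj (w₀ : V) c₀ :=
      ⟨fun h => (Set.disjoint_left.mp hCJ) (h ▸ hc₀C) hw0J, hc₀adj w₀ w₀.2⟩
    have hbw : T.loopless.Adj b (w₀ : V) := ⟨fun h => hadj.1 (Subtype.ext h), hadj.2⟩
    exact no_triangle hT hbw hwc hbc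
  -- unique star centers for J
  have hJctr : ∀ k, ∃ ck ∈ C, (∀ u ∈ Jf k, T.Adj u ck) ∧
      ∀ s ∈ C, T.Adj (Exists.choose (hJne k)) s → s = ck := by
    intro k
    obtain ⟨c₀, ⟨hc₀C, hc₀adj⟩, huniq⟩ := hJcstar k
    refine ⟨c₀, hc₀C, hc₀adj, ?_⟩
    intro s hsC hadj
    refine huniq s ⟨hsC, ?_⟩
    intro u hu
    have : u = Exists.choose (hJne k) := by
      have := hJsing k; rw [this] at hu; simpa using hu
    rw [this]; exact hadj
  choose ck hckC hckadj hckuniq using hJctr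
  choose rr hrr cc hcc hadjr hroot using hTroot
  -- boundary property for T parts
  have hTbd : ∀ j, ∀ t ∈ Tf j, ∀ s, s ∉ Tf j → T.loopless.Adj t s → t = rr j ∧ s = cc j := by
    intro j t ht s hs hadj
    rcases hmemU s with hsC | hsT | hsJ
    · exact hroot j t ht s hsC hadj.2
    · exfalso
      rw [← hTun] at hsT
      obtain ⟨j', hj'⟩ := Set.mem_iUnion.mp hsT
      have hjj' : j ≠ j' := fun h => hs (h ▸ hj')
      exact hTT j j' hjj' t ht s hj' hadj.2
    · exfalso
      have htT : t ∈ TT := hTun ▸ Set.mem_iUnion.mpr ⟨j, ht⟩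
      exact hTJedge t htT s hsJ hadj.2
  -- boundary property for J parts
  have hJbd : ∀ k, ∀ t ∈ Jf k, ∀ s, s ∉ Jf k → T.loopless.Adj t s →
      t = Exists.choose (hJne k) ∧ s = ck k := by
    intro k t ht s hs hadj
    have htu : t = Exists.choose (hJne k) := by
      have h := hJsing k; rw [h] at ht; simpa using ht
    refine ⟨htu, ?_⟩
    have htJ : t ∈ J := hJun ▸ Set.mem_iUnion.mpr ⟨k, ht⟩
    rcases hmemU s with hsC | hsT | hsJ
    · exact hckuniq k s hsC (htu ▸ hadj.2)
    · exact absurd hadj.2 (fun h => hTJedge s hsT t htJ (T.symm h))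
    · exfalso
      rw [← hJun] at hsJ
      obtain ⟨k', hk'⟩ := Set.mem_iUnion.mp hsJ
      have hkk' : k ≠ k' := fun h => hs (h ▸ hk')
      exact hJJ k k' hkk' t ht s hk' hadj.2
  -- looped vertices avoid T parts, and lie in C or are the J singleton
  constructor
  · obtain ⟨c0, hc0⟩ := hCne
    exact ⟨c0, hCloop c0 hc0⟩
  · intro x hx y hy p hp z hz
    by_contra hzL
    have hzC : z ∉ C := fun h => hzL (hCloop z h)
    have hnotT : ∀ w : V, T.Adj w w → ∀ j, w ∉ Tf j :=
      fun w hw j hmem => (hTtree j).1 w hmem hw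
    rcases hmemU z with hzC' | hzT | hzJ
    · exact hzC hzC'
    · rw [← hTun] at hzT
      obtain ⟨j, hj⟩ := Set.mem_iUnion.mp hzT
      have hcjT : cc j ∉ Tf j := fun h =>
        (Set.disjoint_left.mp hCT) (hcc j) (hTun ▸ Set.mem_iUnion.mpr ⟨j, h⟩)
      exact avoid (hTbd j) p hp (hnotT x hx j) (hnotT y hy j) z hz hj
    · rw [← hJun] at hzJ
      obtain ⟨k, hk⟩ := Set.mem_iUnion.mp hzJ
      have hzu : z = Exists.choose (hJne k) := by
        have h := hJsing k; rw [h] at hk; simpa using hk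
      have hnotJ : ∀ w : V, T.Adj w w → w ∈ Jf k → False := by
        intro w hw hmem
        have : w = Exists.choose (hJne k) := by
          have h := hJsing k; rw [h] at hmem; simpa using hmem
        have hwz : w = z := this.trans hzu.symm
        exact hzL (hwz ▸ hw)
      exact avoid (hJbd k) p hp (fun h => hnotJ x hx h) (fun h => hnotJ y hy h) z hz hk

lemma decomp_of_pcl [Fintype V] (hT : T.loopless.IsTree) (hL : (Lset T).Nonempty)
    (hpcl : PCL T) : T.ChordalTreeDecomposable := by
  classical
  obtain ⟨a, haL⟩ := hL
  set L := Lset T with hLdef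
  set G' : SimpleGraph ↥(Lᶜ) := (T.induce Lᶜ).loopless with hG'def
  haveI : Finite G'.ConnectedComponent :=
    Finite.of_surjective G'.connectedComponentMk (fun c => c.exists_rep)
  haveI instF : Fintype G'.ConnectedComponent := Fintype.ofFinite _
  set m := Fintype.card G'.ConnectedComponent with hmdef
  set e : G'.ConnectedComponent ≃ Fin m := Fintype.equivFin _ with hedef
  set Tf : Fin m → Set V :=
    fun j => Subtype.val '' {x : ↥(Lᶜ) | G'.connectedComponentMk x = e.symm j} with hTfdef
  have hTfsub : ∀ j (z : V), z ∈ Tf j → z ∈ Lᶜ := by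
    rintro j z ⟨x, hx, rfl⟩; exact x.2
  have hTfcomp : ∀ j (x : ↥(Lᶜ)), (x : V) ∈ Tf j ↔ G'.connectedComponentMk x = e.symm j := by
    intro j x
    constructor
    · rintro ⟨x', hx', hval⟩
      have : x' = x := Subtype.ext hval
      exact this ▸ hx'
    · intro h; exact ⟨x, h, rfl⟩
  refine ⟨L, Lᶜ, ∅, disjoint_compl_right, ?_, ?_, ?_, ⟨a, haL⟩, fun v hv => hv,
    chordal_induce hT, m, 0, Tf, fun k => k.elim0, ?_, ?_, ?_,
    fun k => k.elim0, fun k => k.elim0, ?_, ?_, ?_, fun k => k.elim0, fun k => k.elim0,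
    ?_, fun k => k.elim0, ?_⟩
  · exact disjoint_bot_right
  · exact disjoint_bot_right
  · simp
  · -- Tf nonempty
    intro j
    obtain ⟨x, hx⟩ := (e.symm j).exists_rep
    exact ⟨x.val, ⟨x, hx, rfl⟩⟩
  · -- Tf disjoint
    intro j j' hne
    rw [Set.disjoint_left]
    rintro z ⟨x, hx, rfl⟩ ⟨x', hx', hval⟩
    have hxx : x' = x := Subtype.ext hval
    subst hxx
    exact hne (e.symm.injective (hx ▸ hx'))
  · -- union of Tf = Lᶜ
    ext z
    simp only [Set.mem_iUnion]
    constructor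
    · rintro ⟨j, hj⟩; exact hTfsub j z hj
    · intro hz
      exact ⟨e (G'.connectedComponentMk ⟨z, hz⟩), ⟨⟨z, hz⟩, by simp only [Set.mem_setOf_eq, Equiv.symm_apply_apply], rfl⟩⟩
  · -- iUnion over Fin 0
    simp
  · -- trees
    intro j
    constructor
    · rintro t ⟨x, hx, rfl⟩ hadj
      exact x.2 hadj
    · constructor
      · rw [connected_iff]
        constructor
        · rintro ⟨za, hza⟩ ⟨zb, hzb⟩
          obtain ⟨xa, hxa, rfl⟩ := hza
          obtain ⟨xb, hxb, rfl⟩ := hzb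
          obtain ⟨w⟩ : G'.Reachable xa xb := ConnectedComponent.exact (hxa.trans hxb.symm)
          obtain ⟨q, hq⟩ := walk_of_induce w
          have hsup : ∀ z ∈ q.support, z ∈ Tf j := by
            intro z hzq
            obtain ⟨z', hz1, hz2⟩ := hq z hzq
            refine hz1 ▸ (hTfcomp j z').mpr ?_
            rw [← hxa]
            exact (ConnectedComponent.sound hz2).symm
          have hma : (xa : V) ∈ Tf j := ⟨xa, hxa, rfl⟩
          have hmb : (xb : V) ∈ Tf j := ⟨xb, hxb, rfl⟩
          exact reach_induce q hma hmb hsup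
        · obtain ⟨x, hx⟩ := (e.symm j).exists_rep
          exact ⟨⟨x.val, ⟨x, hx, rfl⟩⟩⟩
      · exact acyclic_induce hT
  · -- root edges
    intro j
    obtain ⟨x₀, hx₀⟩ := (e.symm j).exists_rep
    obtain ⟨r, ccv, hadj, hrL, hccL, w, hw⟩ := attach_exists hT x₀.2 haL
    have hrcomp : G'.connectedComponentMk ⟨r, hrL⟩ = e.symm j := by
      have hreach : ((T.induce Lᶜ).loopless).Reachable ⟨x₀.val, x₀.2⟩ ⟨r, hrL⟩ :=
        reach_induce w x₀.2 hrL (fun z hz => hw z hz)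
      have hx00 : (⟨(x₀ : V), x₀.2⟩ : ↥(Lᶜ)) = x₀ := Subtype.ext rfl
      rw [hx00] at hreach
      have hx₀' : G'.connectedComponentMk x₀ = e.symm j := hx₀
      exact (ConnectedComponent.sound hreach.symm).trans hx₀'
    have hrTf : r ∈ Tf j := ⟨⟨r, hrL⟩, hrcomp, rfl⟩
    refine ⟨r, hrTf, ccv, hccL, hadj.2, ?_⟩
    rintro t ⟨xt, hxt, rfl⟩ c' hc' hadj'
    obtain ⟨w2⟩ : G'.Reachable xt ⟨r, hrL⟩ := ConnectedComponent.exact (hxt.trans hrcomp.symm)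
    obtain ⟨q, hq⟩ := walk_of_induce w2
    have hqs : ∀ z ∈ q.support, z ∉ L := by
      intro z hz
      obtain ⟨z', h1, _⟩ := hq z hz
      exact h1 ▸ z'.2
    exact attach_unique hT hpcl xt.2 hccL hc'
      ⟨fun h => (h ▸ xt.2 : c' ∉ L) hc', hadj'⟩ hadj q hqs
  · -- no edges between distinct T components
    rintro j j' hne t ⟨x, hx, rfl⟩ t' ⟨x', hx', rfl⟩ hAdj
    by_cases hval : (x : V) = (x' : V)
    · exact x.2 (hval ▸ hAdj)
    · have hadj' : G'.Adj x x' := ⟨fun h => hval (congrArg Subtype.val h), hAdj⟩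
      have : G'.connectedComponentMk x = G'.connectedComponentMk x' :=
        ConnectedComponent.sound hadj'.reachable
      exact hne (e.symm.injective (hx.symm.trans (this.trans hx')))
  · -- T-J edges (J empty)
    rintro t _ u hu
    exact absurd hu (Set.notMem_empty u)

end LTaux

/-- For a finite nontrivial looped tree `T`, the following are equivalent:
(1) `T` is chordal/tree decomposable; (2) `T` is dismantlable; (3) `Loop(T)` is nonempty and
connected in `T`. -/
theorem loopedTree_TFAE {V : Type} [Fintype V] [DecidableEq V] [Nontrivial V]
    (T : LoopGraph V) (htree : T.loopless.IsTree) :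
    (T.ChordalTreeDecomposable ↔ T.Dismantlable) ∧
      (T.Dismantlable ↔
        ({v : V | T.Adj v v}.Nonempty ∧
          ((T.induce {v : V | T.Adj v v}).loopless).Connected)) := by
  constructor
  · constructor
    · intro h1
      obtain ⟨hne, hpcl⟩ := LTaux.pcl_of_decomp htree h1
      exact LTaux.dism_of_pcl htree hne hpcl
    · intro h2
      obtain ⟨hne, hpcl⟩ := LTaux.pcl_of_dism htree h2
      exact LTaux.decomp_of_pcl htree hne hpcl
  · constructor
    · intro h2
      obtain ⟨hne, hpcl⟩ := LTaux.pcl_of_dism htree h2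
      exact ⟨hne, LTaux.connected_of_pcl htree hpcl hne⟩
    · rintro ⟨hne, hconn⟩
      exact LTaux.dism_of_pcl htree hne (LTaux.pcl_of_connected htree hconn)
end
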